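/- arXiv:1711.10633 — 6 statements merged into one kernel-verified Lean document; each statement's English description precedes it below -/
import Mathlib

section
/- Let T ≥ 1, let X_1,…,X_T and Y_1,…,Y_T be finite nonempty types, let P_t : X_t → ℝ≥0 and Q_t : Y_t → ℝ≥0 be probability vectors (each summing to 1), let w_t ≥ 0 be weights and d_t : X_t × Y_t → ℝ≥0 stage costs, and let the path cost be d(ξ,ζ) = Σ_{t=1}^T w_t · d_t(ξ_t, ζ_t). Then the nested distance LP value ND between the two stagewise-independent trees (with path probabilities P(i) = ∏_t P_t(i_t) and Q(j) = ∏_t Q_t(j_t)) equals the weighted sum of the stagewise Wasserstein values: ND = Σ_{t=1}^T w_t · d_W(P_t, Q_t; d_t). -/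
open scoped NNReal Classical
open Finset

noncomputable section

/-- A full path of a `T`-stage scenario tree with stage types `X 0, …, X (T-1)`
(0-indexed: index `t` corresponds to stage `t+1` of the paper). -/
abbrev NDPath (X : ℕ → Type) (T : ℕ) := ∀ t : Fin T, X t.1

/-- A stage-`t` prefix (the history of the first `t` stages); `t = 0` is the root. -/
abbrev NDPre (X : ℕ → Type) (t : ℕ) := ∀ τ : Fin t, X τ.1

/-- The path `i` extends the stage-`t` prefix `k`. -/
def NDExtends {X : ℕ → Type} {T t : ℕ} (i : NDPath X T) (k : NDPre X t) : Prop :=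
  ∀ (τ : Fin t) (h : τ.1 < T), i ⟨τ.1, h⟩ = k τ

/-- The subtree weight `π_{k,l}` of a transport plan `π` on path pairs:
the total mass of `π` on path pairs extending the prefix pair `(k, l)`. -/
def NDsubw {X Y : ℕ → Type} {T : ℕ} [∀ n, Fintype (X n)] [∀ n, Fintype (Y n)]
    (π : NDPath X T → NDPath Y T → ℝ≥0) (t : ℕ) (k : NDPre X t) (l : NDPre Y t) : ℝ≥0 :=
  ∑ i : NDPath X T, ∑ j : NDPath Y T,
    if NDExtends i k ∧ NDExtends j l then π i j else 0

/-- The nested distance LP value: minimum of `∑ π(i,j) d(i,j)` over transport plans of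
total mass one satisfying the successor-form conditional marginal constraints. -/
def NDval {X Y : ℕ → Type} (T : ℕ) [∀ n, Fintype (X n)] [∀ n, Fintype (Y n)]
    (p : ∀ t, NDPre X t → X t → ℝ≥0) (q : ∀ t, NDPre Y t → Y t → ℝ≥0)
    (d : NDPath X T → NDPath Y T → ℝ≥0) : ℝ≥0 :=
  sInf { v | ∃ π : NDPath X T → NDPath Y T → ℝ≥0,
    (∑ i, ∑ j, π i j) = 1 ∧
    (∀ t, t < T → ∀ (k : NDPre X t) (l : NDPre Y t) (x : X t) (y : Y t),
      (∑ y' : Y t, NDsubw π (t+1) (Fin.snoc k x) (Fin.snoc l y'))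
          = p t k x * NDsubw π t k l ∧
      (∑ x' : X t, NDsubw π (t+1) (Fin.snoc k x') (Fin.snoc l y))
          = q t l y * NDsubw π t k l) ∧
    v = ∑ i, ∑ j, π i j * d i j }

/-- The sub-tree distance `D_t(k,l)`, defined by backward recursion: at `t = T` it is the
path cost, and for `t < T` it is the optimal value of the stage-`t` transport subproblem. -/
def NDsub {X Y : ℕ → Type} (T : ℕ) [∀ n, Fintype (X n)] [∀ n, Fintype (Y n)]
    (p : ∀ t, NDPre X t → X t → ℝ≥0) (q : ∀ t, NDPre Y t → Y t → ℝ≥0)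
    (d : NDPath X T → NDPath Y T → ℝ≥0)
    (t : ℕ) (k : NDPre X t) (l : NDPre Y t) : ℝ≥0 :=
  if h : t < T then
    sInf { v | ∃ π : X t → Y t → ℝ≥0,
      (∀ x, ∑ y, π x y = p t k x) ∧ (∀ y, ∑ x, π x y = q t l y) ∧
      v = ∑ x, ∑ y, π x y * NDsub T p q d (t+1) (Fin.snoc k x) (Fin.snoc l y) }
  else
    d (fun τ => k ⟨τ.1, lt_of_lt_of_le τ.2 (not_lt.mp h)⟩)
      (fun τ => l ⟨τ.1, lt_of_lt_of_le τ.2 (not_lt.mp h)⟩)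
  termination_by T - t
  decreasing_by omega

/-- The dynamic-programming value function `Φ_t(k,l,m)` with mass argument `m`. -/
def NDPhi {X Y : ℕ → Type} (T : ℕ) [∀ n, Fintype (X n)] [∀ n, Fintype (Y n)]
    (p : ∀ t, NDPre X t → X t → ℝ≥0) (q : ∀ t, NDPre Y t → Y t → ℝ≥0)
    (d : NDPath X T → NDPath Y T → ℝ≥0)
    (t : ℕ) (k : NDPre X t) (l : NDPre Y t) (m : ℝ≥0) : ℝ≥0 :=
  if h : t < T then
    sInf { v | ∃ π : X t → Y t → ℝ≥0,
      (∀ x, ∑ y, π x y = p t k x * m) ∧ (∀ y, ∑ x, π x y = q t l y * m) ∧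
      v = ∑ x, ∑ y, NDPhi T p q d (t+1) (Fin.snoc k x) (Fin.snoc l y) (π x y) }
  else
    m * d (fun τ => k ⟨τ.1, lt_of_lt_of_le τ.2 (not_lt.mp h)⟩)
          (fun τ => l ⟨τ.1, lt_of_lt_of_le τ.2 (not_lt.mp h)⟩)
  termination_by T - t
  decreasing_by omega

/-- The Wasserstein (optimal transport) value between two probability vectors for a cost `c`. -/
def dW {A B : Type*} [Fintype A] [Fintype B]
    (P : A → ℝ≥0) (Q : B → ℝ≥0) (c : A → B → ℝ≥0) : ℝ≥0 :=
  sInf { v | ∃ π : A → B → ℝ≥0,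
    (∀ a, ∑ b, π a b = P a) ∧ (∀ b, ∑ a, π a b = Q b) ∧
    v = ∑ a, ∑ b, π a b * c a b }

/-- The conditional probability `P(i ∣ k)` of the path `i` given its stage-`t` prefix:
the product of the conditional probabilities of the steps of `i` after stage `t`.
With `t = 0` this is the (unconditional) path probability `P(i)`. -/
def NDcondP {X : ℕ → Type} {T : ℕ} (p : ∀ t, NDPre X t → X t → ℝ≥0)
    (t : ℕ) (i : NDPath X T) : ℝ≥0 :=
  ∏ τ ∈ Finset.Ico t T,
    if h : τ < T then p τ (fun s => i ⟨s.1, lt_trans s.2 h⟩) (i ⟨τ, h⟩) else 1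

end
section AuxND

variable {X Y : ℕ → Type} {T : ℕ} [∀ n, Fintype (X n)] [∀ n, Fintype (Y n)]

/-- Restriction of a path to its stage-`t` prefix. -/
def NDres {t : ℕ} (htT : t ≤ T) (i : NDPath X T) : NDPre X t :=
  fun τ => i ⟨τ.1, lt_of_lt_of_le τ.2 htT⟩

lemma ndextends_iff {t : ℕ} (htT : t ≤ T) (i : NDPath X T) (k : NDPre X t) :
    NDExtends i k ↔ k = NDres htT i := by
  constructor
  · intro h; funext τ; exact (h τ (lt_of_lt_of_le τ.2 htT)).symm
  · rintro rfl τ hτ; rfl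

lemma ndextends_snoc {t : ℕ} (ht : t < T) (i : NDPath X T) (k : NDPre X t) (x : X t) :
    NDExtends i (Fin.snoc k x) ↔ NDExtends i k ∧ i ⟨t, ht⟩ = x := by
  constructor
  · intro h
    refine ⟨fun τ hτ => ?_, ?_⟩
    · have h2 := h τ.castSucc hτ
      rwa [Fin.snoc_castSucc] at h2
    · have h2 := h (Fin.last t) ht
      rwa [Fin.snoc_last] at h2
  · rintro ⟨h1, h2⟩ τ hτ
    induction τ using Fin.lastCases with
    | last =>
      rw [Fin.snoc_last]
      exact h2
    | cast σ =>
      rw [Fin.snoc_castSucc]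
      exact h1 σ hτ

lemma sum_ind_ext {t : ℕ} (htT : t ≤ T) (i : NDPath X T) :
    (∑ k : NDPre X t, (if NDExtends i k then (1:ℝ≥0) else 0)) = 1 := by
  simp [ndextends_iff htT]

lemma sum_k_ind_snoc {t : ℕ} (ht : t < T) (i : NDPath X T) (x : X t) :
    (∑ k : NDPre X t, (if NDExtends i (Fin.snoc k x) then (1:ℝ≥0) else 0))
      = if i ⟨t, ht⟩ = x then 1 else 0 := by
  simp only [ndextends_snoc ht, ndextends_iff (le_of_lt ht)]
  by_cases hx : i ⟨t, ht⟩ = x <;> simp [hx]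

lemma sum_y_ind_snoc {t : ℕ} (ht : t < T) (j : NDPath Y T) (l : NDPre Y t) :
    (∑ y' : Y t, (if NDExtends j (Fin.snoc l y') then (1:ℝ≥0) else 0))
      = if NDExtends j l then 1 else 0 := by
  simp only [ndextends_snoc ht]
  by_cases hC : NDExtends j l <;> simp [hC]

lemma NDsubw_eq (π : NDPath X T → NDPath Y T → ℝ≥0) (t : ℕ) (k : NDPre X t) (l : NDPre Y t) :
    NDsubw π t k l = ∑ i, ∑ j,
      (if NDExtends i k then (1:ℝ≥0) else 0) * ((if NDExtends j l then (1:ℝ≥0) else 0) * π i j) := by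
  unfold NDsubw
  refine Finset.sum_congr rfl fun i _ => Finset.sum_congr rfl fun j _ => ?_
  by_cases h1 : NDExtends i k <;> by_cases h2 : NDExtends j l <;> simp [h1, h2]

/-- Master factorization: a doubly-indexed product sum over path pairs factorizes. -/
lemma sum_sum_prod (g : ∀ τ : Fin T, X τ.1 → Y τ.1 → ℝ≥0) :
    (∑ i : NDPath X T, ∑ j : NDPath Y T, ∏ τ, g τ (i τ) (j τ))
      = ∏ τ : Fin T, ∑ x, ∑ y, g τ x y := by
  have h1 : ∀ i : NDPath X T,
      (∑ j : NDPath Y T, ∏ τ, g τ (i τ) (j τ)) = ∏ τ, ∑ y, g τ (i τ) y := by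
    intro i
    rw [Finset.prod_univ_sum, Fintype.piFinset_univ]
  simp_rw [h1]
  rw [Finset.prod_univ_sum, Fintype.piFinset_univ]

end AuxND
section AuxND2
set_option linter.unusedSectionVars false

lemma sum_rot3 {M α β γ : Type*} [AddCommMonoid M] [Fintype α] [Fintype β] [Fintype γ]
    (f : α → β → γ → M) :
    (∑ a, ∑ b, ∑ c, f a b c) = ∑ b, ∑ c, ∑ a, f a b c := by
  calc (∑ a, ∑ b, ∑ c, f a b c) = ∑ b, ∑ a, ∑ c, f a b c := Finset.sum_comm
    _ = ∑ b, ∑ c, ∑ a, f a b c := Finset.sum_congr rfl fun b _ => Finset.sum_comm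

lemma sum_swap4 {M α β γ δ : Type*} [AddCommMonoid M] [Fintype α] [Fintype β] [Fintype γ]
    [Fintype δ] (f : α → β → γ → δ → M) :
    (∑ a, ∑ b, ∑ c, ∑ d, f a b c d) = ∑ c, ∑ d, ∑ a, ∑ b, f a b c d := by
  rw [sum_rot3 (fun a b c => ∑ d, f a b c d)]
  rw [sum_rot3 (fun b c a => ∑ d, f a b c d)]
  refine Finset.sum_congr rfl fun c _ => ?_
  rw [sum_rot3 (fun a b d => f a b c d)]
  rw [sum_rot3 (fun b d a => f a b c d)]

variable {X Y : ℕ → Type} {T : ℕ} [∀ n, Fintype (X n)] [∀ n, Fintype (Y n)]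

lemma sum_subw (π : NDPath X T → NDPath Y T → ℝ≥0) {t : ℕ} (htT : t ≤ T) :
    (∑ k : NDPre X t, ∑ l : NDPre Y t, NDsubw π t k l) = ∑ i, ∑ j, π i j := by
  simp_rw [NDsubw_eq]
  rw [sum_swap4]
  refine Finset.sum_congr rfl fun i _ => Finset.sum_congr rfl fun j _ => ?_
  simp_rw [← Finset.mul_sum, ← Finset.sum_mul]
  rw [sum_ind_ext htT i, sum_ind_ext htT j, one_mul, one_mul]

lemma sum_y_subw (π : NDPath X T → NDPath Y T → ℝ≥0) {t : ℕ} (ht : t < T)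
    (k : NDPre X t) (l : NDPre Y t) (x : X t) :
    (∑ y' : Y t, NDsubw π (t+1) (Fin.snoc k x) (Fin.snoc l y'))
      = ∑ i, ∑ j, (if NDExtends i (Fin.snoc k x) then (1:ℝ≥0) else 0)
          * ((if NDExtends j l then (1:ℝ≥0) else 0) * π i j) := by
  simp_rw [NDsubw_eq]
  rw [sum_rot3 (fun y' i j => _)]
  refine Finset.sum_congr rfl fun i _ => Finset.sum_congr rfl fun j _ => ?_
  rw [← Finset.mul_sum, ← Finset.sum_mul, sum_y_ind_snoc ht]

lemma sum_x_subw (π : NDPath X T → NDPath Y T → ℝ≥0) {t : ℕ} (ht : t < T)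
    (k : NDPre X t) (l : NDPre Y t) (y : Y t) :
    (∑ x' : X t, NDsubw π (t+1) (Fin.snoc k x') (Fin.snoc l y))
      = ∑ i, ∑ j, (if NDExtends i k then (1:ℝ≥0) else 0)
          * ((if NDExtends j (Fin.snoc l y) then (1:ℝ≥0) else 0) * π i j) := by
  simp_rw [NDsubw_eq]
  rw [sum_rot3 (fun x' i j => _)]
  refine Finset.sum_congr rfl fun i _ => Finset.sum_congr rfl fun j _ => ?_
  rw [← Finset.sum_mul, sum_y_ind_snoc (Y := X) ht]

lemma marg_row (π : NDPath X T → NDPath Y T → ℝ≥0) {t : ℕ} (ht : t < T) (x : X t) (c : ℝ≥0)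
    (hc : ∀ (k : NDPre X t) (l : NDPre Y t),
      (∑ y' : Y t, NDsubw π (t+1) (Fin.snoc k x) (Fin.snoc l y')) = c * NDsubw π t k l) :
    (∑ i, ∑ j, if i ⟨t, ht⟩ = x then π i j else 0) = c * (∑ i, ∑ j, π i j) := by
  have key : (∑ k : NDPre X t, ∑ l : NDPre Y t, ∑ y' : Y t,
      NDsubw π (t+1) (Fin.snoc k x) (Fin.snoc l y'))
      = c * ∑ k : NDPre X t, ∑ l : NDPre Y t, NDsubw π t k l := by
    simp_rw [hc, ← Finset.mul_sum]
  rw [sum_subw π (le_of_lt ht)] at key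
  rw [← key]
  simp_rw [sum_y_subw π ht]
  rw [sum_swap4]
  refine Finset.sum_congr rfl fun i _ => Finset.sum_congr rfl fun j _ => ?_
  simp_rw [← Finset.mul_sum, ← Finset.sum_mul]
  rw [sum_ind_ext (le_of_lt ht) j, sum_k_ind_snoc ht i x]
  by_cases hx : i ⟨t, ht⟩ = x <;> simp [hx]

lemma marg_col (π : NDPath X T → NDPath Y T → ℝ≥0) {t : ℕ} (ht : t < T) (y : Y t) (c : ℝ≥0)
    (hc : ∀ (k : NDPre X t) (l : NDPre Y t),
      (∑ x' : X t, NDsubw π (t+1) (Fin.snoc k x') (Fin.snoc l y)) = c * NDsubw π t k l) :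
    (∑ i, ∑ j, if j ⟨t, ht⟩ = y then π i j else 0) = c * (∑ i, ∑ j, π i j) := by
  have key : (∑ k : NDPre X t, ∑ l : NDPre Y t, ∑ x' : X t,
      NDsubw π (t+1) (Fin.snoc k x') (Fin.snoc l y))
      = c * ∑ k : NDPre X t, ∑ l : NDPre Y t, NDsubw π t k l := by
    simp_rw [hc, ← Finset.mul_sum]
  rw [sum_subw π (le_of_lt ht)] at key
  rw [← key]
  simp_rw [sum_x_subw π ht]
  rw [sum_swap4]
  refine Finset.sum_congr rfl fun i _ => Finset.sum_congr rfl fun j _ => ?_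
  simp_rw [← Finset.mul_sum, ← Finset.sum_mul]
  rw [sum_ind_ext (le_of_lt ht) i, sum_k_ind_snoc (X := Y) ht j y]
  by_cases hy : j ⟨t, ht⟩ = y <;> simp [hy]

end AuxND2
section AuxND3
set_option linter.unusedSectionVars false

variable {X Y : ℕ → Type} {T : ℕ} [∀ n, Fintype (X n)] [∀ n, Fintype (Y n)]

lemma subw_prod (π : ∀ τ : Fin T, X τ.1 → Y τ.1 → ℝ≥0) {t : ℕ} (htT : t ≤ T)
    (k : NDPre X t) (l : NDPre Y t) :
    NDsubw (fun i j => ∏ τ, π τ (i τ) (j τ)) t k l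
      = ∏ τ : Fin T, (if h : τ.1 < t then π τ (k ⟨τ.1, h⟩) (l ⟨τ.1, h⟩)
          else ∑ x, ∑ y, π τ x y) := by
  unfold NDsubw
  have hterm : ∀ (i : NDPath X T) (j : NDPath Y T),
      (if NDExtends i k ∧ NDExtends j l then ∏ τ, π τ (i τ) (j τ) else 0)
        = ∏ τ : Fin T, (if h : τ.1 < t then
            (if i τ = k ⟨τ.1, h⟩ ∧ j τ = l ⟨τ.1, h⟩ then π τ (i τ) (j τ) else 0)
          else π τ (i τ) (j τ)) := by
    intro i j
    by_cases hext : NDExtends i k ∧ NDExtends j l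
    · rw [if_pos hext]
      refine Finset.prod_congr rfl fun τ _ => ?_
      split_ifs with h h2
      · rfl
      · exact absurd ⟨hext.1 ⟨τ.1, h⟩ τ.2, hext.2 ⟨τ.1, h⟩ τ.2⟩ h2
      · rfl
    · rw [if_neg hext]
      symm
      rw [not_and_or] at hext
      rcases hext with hx | hx
    
      · obtain ⟨τ₀, hτ₀, hne⟩ : ∃ (τ₀ : Fin t) (h : τ₀.1 < T), i ⟨τ₀.1, h⟩ ≠ k τ₀ := by
          by_contra hcon
          push_neg at hcon
          exact hx fun τ hτ => hcon τ hτ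
        refine Finset.prod_eq_zero (Finset.mem_univ (⟨τ₀.1, hτ₀⟩ : Fin T)) ?_
        have hlt : (⟨τ₀.1, hτ₀⟩ : Fin T).1 < t := τ₀.2
        rw [dif_pos hlt, if_neg]
        intro hand
        exact hne hand.1
      · obtain ⟨τ₀, hτ₀, hne⟩ : ∃ (τ₀ : Fin t) (h : τ₀.1 < T), j ⟨τ₀.1, h⟩ ≠ l τ₀ := by
          by_contra hcon
          push_neg at hcon
          exact hx fun τ hτ => hcon τ hτ
        refine Finset.prod_eq_zero (Finset.mem_univ (⟨τ₀.1, hτ₀⟩ : Fin T)) ?_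
        have hlt : (⟨τ₀.1, hτ₀⟩ : Fin T).1 < t := τ₀.2
        rw [dif_pos hlt, if_neg]
        intro hand
        exact hne hand.2
  simp_rw [hterm]
  rw [sum_sum_prod (T := T) (X := X) (Y := Y) (g := fun τ x y => if h : τ.1 < t then
      (if x = k ⟨τ.1, h⟩ ∧ y = l ⟨τ.1, h⟩ then π τ x y else 0) else π τ x y)]
  refine Finset.prod_congr rfl fun τ _ => ?_
  split_ifs with h
  · have hrow : ∀ x : X τ.1,
        (∑ y, if x = k ⟨τ.1, h⟩ ∧ y = l ⟨τ.1, h⟩ then π τ x y else 0)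
          = if x = k ⟨τ.1, h⟩ then π τ x (l ⟨τ.1, h⟩) else 0 := by
      intro x
      by_cases hx : x = k ⟨τ.1, h⟩ <;> simp [hx]
    simp_rw [hrow]
    simp
  · rfl

lemma prod_mass (π : ∀ τ : Fin T, X τ.1 → Y τ.1 → ℝ≥0)
    (h1 : ∀ τ : Fin T, (∑ x, ∑ y, π τ x y) = 1) :
    (∑ i : NDPath X T, ∑ j : NDPath Y T, ∏ τ, π τ (i τ) (j τ)) = 1 := by
  rw [sum_sum_prod]
  exact Finset.prod_eq_one fun τ _ => h1 τ

/-- The key stage-factorization for the product plan's constraints. -/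
lemma prod_subw_snoc (π : ∀ τ : Fin T, X τ.1 → Y τ.1 → ℝ≥0) {t : ℕ} (ht : t < T)
    (k : NDPre X t) (l : NDPre Y t) (x : X t) (y' : Y t) :
    NDsubw (fun i j => ∏ τ, π τ (i τ) (j τ)) (t+1) (Fin.snoc k x) (Fin.snoc l y')
      = π ⟨t, ht⟩ x y' *
        ∏ τ ∈ Finset.univ.erase (⟨t, ht⟩ : Fin T),
          (if h : τ.1 < t then π τ (k ⟨τ.1, h⟩) (l ⟨τ.1, h⟩) else ∑ a, ∑ b, π τ a b) := by
  rw [subw_prod π (Nat.succ_le_of_lt ht)]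
  rw [← Finset.mul_prod_erase Finset.univ _ (Finset.mem_univ (⟨t, ht⟩ : Fin T))]
  congr 1
  · rw [dif_pos (Nat.lt_succ_self t)]
    congr 1
    · exact Fin.snoc_last (α := fun σ : Fin (t+1) => X σ.1) x k
    · exact Fin.snoc_last (α := fun σ : Fin (t+1) => Y σ.1) y' l
  · refine Finset.prod_congr rfl fun τ hτ => ?_
    have hne : τ ≠ (⟨t, ht⟩ : Fin T) := (Finset.mem_erase.mp hτ).1
    by_cases h : τ.1 < t
    · rw [dif_pos (Nat.lt_succ_of_lt h), dif_pos h]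
      congr 1
      · exact Fin.snoc_castSucc (α := fun σ : Fin (t+1) => X σ.1) x k ⟨τ.1, h⟩
      · exact Fin.snoc_castSucc (α := fun σ : Fin (t+1) => Y σ.1) y' l ⟨τ.1, h⟩
    · have hvne : τ.1 ≠ t := fun hc => hne (Fin.ext hc)
      have h2 : ¬ τ.1 < t + 1 := by omega
      rw [dif_neg h2, dif_neg h]

end AuxND3
section AuxND4
set_option linter.unusedSectionVars false

variable {X Y : ℕ → Type} {T : ℕ} [∀ n, Fintype (X n)] [∀ n, Fintype (Y n)]

lemma prod_plan_row (π : ∀ τ : Fin T, X τ.1 → Y τ.1 → ℝ≥0)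
    (h1 : ∀ τ : Fin T, (∑ x, ∑ y, π τ x y) = 1) {t : ℕ} (ht : t < T)
    (k : NDPre X t) (l : NDPre Y t) (x : X t) :
    (∑ y' : Y t, NDsubw (fun i j => ∏ τ, π τ (i τ) (j τ)) (t+1) (Fin.snoc k x) (Fin.snoc l y'))
      = (∑ y' : Y t, π ⟨t, ht⟩ x y') * NDsubw (fun i j => ∏ τ, π τ (i τ) (j τ)) t k l := by
  simp_rw [prod_subw_snoc π ht k l x]
  rw [← Finset.sum_mul]
  congr 1
  rw [subw_prod π (le_of_lt ht) k l]
  rw [← Finset.mul_prod_erase Finset.univ _ (Finset.mem_univ (⟨t, ht⟩ : Fin T))]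
  rw [dif_neg (lt_irrefl t), h1 ⟨t, ht⟩, one_mul]

lemma prod_plan_col (π : ∀ τ : Fin T, X τ.1 → Y τ.1 → ℝ≥0)
    (h1 : ∀ τ : Fin T, (∑ x, ∑ y, π τ x y) = 1) {t : ℕ} (ht : t < T)
    (k : NDPre X t) (l : NDPre Y t) (y : Y t) :
    (∑ x' : X t, NDsubw (fun i j => ∏ τ, π τ (i τ) (j τ)) (t+1) (Fin.snoc k x') (Fin.snoc l y))
      = (∑ x' : X t, π ⟨t, ht⟩ x' y) * NDsubw (fun i j => ∏ τ, π τ (i τ) (j τ)) t k l := by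
  have hs : ∀ x' : X t,
      NDsubw (fun i j => ∏ τ, π τ (i τ) (j τ)) (t+1) (Fin.snoc k x') (Fin.snoc l y)
        = π ⟨t, ht⟩ x' y *
          ∏ τ ∈ Finset.univ.erase (⟨t, ht⟩ : Fin T),
            (if h : τ.1 < t then π τ (k ⟨τ.1, h⟩) (l ⟨τ.1, h⟩) else ∑ a, ∑ b, π τ a b) :=
    fun x' => prod_subw_snoc π ht k l x' y
  simp_rw [hs]
  rw [← Finset.sum_mul]
  congr 1
  rw [subw_prod π (le_of_lt ht) k l]
  rw [← Finset.mul_prod_erase Finset.univ _ (Finset.mem_univ (⟨t, ht⟩ : Fin T))]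
  rw [dif_neg (lt_irrefl t), h1 ⟨t, ht⟩, one_mul]

lemma prod_cost (π : ∀ τ : Fin T, X τ.1 → Y τ.1 → ℝ≥0)
    (h1 : ∀ τ : Fin T, (∑ x, ∑ y, π τ x y) = 1) (t : Fin T) (c : ∀ n, X n → Y n → ℝ≥0) :
    (∑ i : NDPath X T, ∑ j : NDPath Y T, (∏ τ, π τ (i τ) (j τ)) * c t.1 (i t) (j t))
      = ∑ x, ∑ y, π t x y * c t.1 x y := by
  have hterm : ∀ (i : NDPath X T) (j : NDPath Y T),
      (∏ τ, π τ (i τ) (j τ)) * c t.1 (i t) (j t)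
        = ∏ τ : Fin T, (if τ = t then π τ (i τ) (j τ) * c τ.1 (i τ) (j τ)
            else π τ (i τ) (j τ)) := by
    intro i j
    rw [← Finset.mul_prod_erase Finset.univ
      (fun τ : Fin T => if τ = t then π τ (i τ) (j τ) * c τ.1 (i τ) (j τ) else π τ (i τ) (j τ))
      (Finset.mem_univ t)]
    rw [if_pos rfl]
    rw [← Finset.mul_prod_erase Finset.univ (fun τ : Fin T => π τ (i τ) (j τ))
      (Finset.mem_univ t)]
    have he : ∀ τ ∈ Finset.univ.erase t,
        (if τ = t then π τ (i τ) (j τ) * c τ.1 (i τ) (j τ) else π τ (i τ) (j τ))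
          = π τ (i τ) (j τ) := fun τ hτ => if_neg (Finset.mem_erase.mp hτ).1
    rw [Finset.prod_congr rfl he]
    ring
  simp_rw [hterm]
  rw [sum_sum_prod (T := T) (X := X) (Y := Y)
    (g := fun τ x y => if τ = t then π τ x y * c τ.1 x y else π τ x y)]
  rw [← Finset.mul_prod_erase Finset.univ _ (Finset.mem_univ t)]
  have h2 : (∑ x, ∑ y, if t = t then π t x y * c t.1 x y else π t x y)
      = ∑ x, ∑ y, π t x y * c t.1 x y := by simp
  have h3 : (∏ τ ∈ Finset.univ.erase t,
      ∑ x, ∑ y, (if τ = t then π τ x y * c τ.1 x y else π τ x y)) = 1 := by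
    refine Finset.prod_eq_one fun τ hτ => ?_
    have := (Finset.mem_erase.mp hτ).1
    simp only [if_neg this]
    exact h1 τ
  rw [h2, h3, mul_one]

end AuxND4
set_option maxHeartbeats 2000000 in
/-- For stagewise-independent trees and a separable path cost,
the nested distance equals the weighted sum of the stagewise Wasserstein distances. -/
theorem nestedDistance_eq_sum_wasserstein
    (T : ℕ) (hT : 1 ≤ T) (X Y : ℕ → Type)
    [∀ n, Fintype (X n)] [∀ n, Nonempty (X n)]
    [∀ n, Fintype (Y n)] [∀ n, Nonempty (Y n)]
    (P : ∀ n, X n → ℝ≥0) (Q : ∀ n, Y n → ℝ≥0)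
    (hP : ∀ t, t < T → ∑ x, P t x = 1) (hQ : ∀ t, t < T → ∑ y, Q t y = 1)
    (w : ℕ → ℝ≥0) (dstage : ∀ n, X n → Y n → ℝ≥0) :
    NDval T (fun t _ x => P t x) (fun t _ y => Q t y)
        (fun i j => ∑ t : Fin T, w t.1 * dstage t.1 (i t) (j t))
      = ∑ t : Fin T, w t.1 * dW (P t.1) (Q t.1) (dstage t.1) := by
  classical
  have hT0 : (T : ℝ≥0) ≠ 0 := Nat.cast_ne_zero.mpr (by omega)
  -- the feasible set of the nested-distance LP
  set Sset : Set ℝ≥0 := {v | ∃ π : NDPath X T → NDPath Y T → ℝ≥0,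
    (∑ i, ∑ j, π i j) = 1 ∧
    (∀ t, t < T → ∀ (k : NDPre X t) (l : NDPre Y t) (x : X t) (y : Y t),
      (∑ y' : Y t, NDsubw π (t+1) (Fin.snoc k x) (Fin.snoc l y'))
          = P t x * NDsubw π t k l ∧
      (∑ x' : X t, NDsubw π (t+1) (Fin.snoc k x') (Fin.snoc l y))
          = Q t y * NDsubw π t k l) ∧
    v = ∑ i, ∑ j, π i j * ∑ t : Fin T, w t.1 * dstage t.1 (i t) (j t)} with hSset
  have hND : NDval T (fun t _ x => P t x) (fun t _ y => Q t y)
      (fun i j => ∑ t : Fin T, w t.1 * dstage t.1 (i t) (j t)) = sInf Sset := rfl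
  rw [hND]
  -- base (product) couplings for each stage
  have hPQplan : ∀ t : Fin T, ∃ π : X t.1 → Y t.1 → ℝ≥0,
      (∀ a, (∑ b, π a b) = P t.1 a) ∧ (∀ b, (∑ a, π a b) = Q t.1 b) := by
    intro t
    refine ⟨fun a b => P t.1 a * Q t.1 b, fun a => ?_, fun b => ?_⟩
    · rw [← Finset.mul_sum, hQ t.1 t.2, mul_one]
    · rw [← Finset.sum_mul, hP t.1 t.2, one_mul]
  -- families of stagewise couplings give feasible product plans
  have hmem : ∀ π : (∀ τ : Fin T, X τ.1 → Y τ.1 → ℝ≥0),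
      (∀ τ : Fin T, ∀ a, (∑ b, π τ a b) = P τ.1 a) →
      (∀ τ : Fin T, ∀ b, (∑ a, π τ a b) = Q τ.1 b) →
      (∑ t : Fin T, w t.1 * ∑ x, ∑ y, π t x y * dstage t.1 x y) ∈ Sset := by
    intro π hrow hcol
    have h1 : ∀ τ : Fin T, (∑ x, ∑ y, π τ x y) = 1 := by
      intro τ
      calc (∑ x, ∑ y, π τ x y) = ∑ x, P τ.1 x :=
            Finset.sum_congr rfl fun x _ => hrow τ x
        _ = 1 := hP τ.1 τ.2
    refine ⟨fun i j => ∏ τ, π τ (i τ) (j τ), prod_mass π h1, ?_, ?_⟩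
    · intro t ht k l x y
      constructor
      · rw [prod_plan_row π h1 ht k l x]
        congr 1
        exact hrow ⟨t, ht⟩ x
      · rw [prod_plan_col π h1 ht k l y]
        congr 1
        exact hcol ⟨t, ht⟩ y
    · symm
      calc (∑ i : NDPath X T, ∑ j : NDPath Y T,
              (∏ τ, π τ (i τ) (j τ)) * ∑ t : Fin T, w t.1 * dstage t.1 (i t) (j t))
          = ∑ i : NDPath X T, ∑ j : NDPath Y T, ∑ t : Fin T,
              (∏ τ, π τ (i τ) (j τ)) * (w t.1 * dstage t.1 (i t) (j t)) := by
            simp_rw [Finset.mul_sum]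
        _ = ∑ t : Fin T, ∑ i : NDPath X T, ∑ j : NDPath Y T,
              (∏ τ, π τ (i τ) (j τ)) * (w t.1 * dstage t.1 (i t) (j t)) :=
            (sum_rot3 (fun (t : Fin T) (i : NDPath X T) (j : NDPath Y T) =>
              (∏ τ, π τ (i τ) (j τ)) * (w t.1 * dstage t.1 (i t) (j t)))).symm
        _ = ∑ t : Fin T, w t.1 * ∑ x, ∑ y, π t x y * dstage t.1 x y := by
            refine Finset.sum_congr rfl fun t _ => ?_
            calc (∑ i : NDPath X T, ∑ j : NDPath Y T,
                    (∏ τ, π τ (i τ) (j τ)) * (w t.1 * dstage t.1 (i t) (j t)))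
                = ∑ i : NDPath X T, ∑ j : NDPath Y T,
                    w t.1 * ((∏ τ, π τ (i τ) (j τ)) * dstage t.1 (i t) (j t)) := by
                  refine Finset.sum_congr rfl fun i _ => Finset.sum_congr rfl fun j _ => ?_
                  ring
              _ = w t.1 * ∑ i : NDPath X T, ∑ j : NDPath Y T,
                    (∏ τ, π τ (i τ) (j τ)) * dstage t.1 (i t) (j t) := by
                  simp_rw [← Finset.mul_sum]
              _ = w t.1 * ∑ x, ∑ y, π t x y * dstage t.1 x y := by
                  rw [prod_cost π h1 t dstage]
  -- lower bound: every feasible value dominates the stagewise Wasserstein sum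
  have hlb : ∀ v ∈ Sset, (∑ t : Fin T, w t.1 * dW (P t.1) (Q t.1) (dstage t.1)) ≤ v := by
    rintro v ⟨π, hmass, hcon, rfl⟩
    have hcost : (∑ i, ∑ j, π i j * ∑ t : Fin T, w t.1 * dstage t.1 (i t) (j t))
        = ∑ t : Fin T, w t.1 * ∑ i, ∑ j, π i j * dstage t.1 (i t) (j t) := by
      calc (∑ i, ∑ j, π i j * ∑ t : Fin T, w t.1 * dstage t.1 (i t) (j t))
          = ∑ i, ∑ j, ∑ t : Fin T, π i j * (w t.1 * dstage t.1 (i t) (j t)) := by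
            simp_rw [Finset.mul_sum]
        _ = ∑ t : Fin T, ∑ i, ∑ j, π i j * (w t.1 * dstage t.1 (i t) (j t)) :=
            (sum_rot3 (fun (t : Fin T) (i : NDPath X T) (j : NDPath Y T) =>
              π i j * (w t.1 * dstage t.1 (i t) (j t)))).symm
        _ = ∑ t : Fin T, ∑ i, ∑ j, w t.1 * (π i j * dstage t.1 (i t) (j t)) := by
            refine Finset.sum_congr rfl fun t _ => ?_
            refine Finset.sum_congr rfl fun i _ => Finset.sum_congr rfl fun j _ => ?_
            ring
        _ = ∑ t : Fin T, w t.1 * ∑ i, ∑ j, π i j * dstage t.1 (i t) (j t) := by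
            refine Finset.sum_congr rfl fun t _ => ?_
            simp_rw [← Finset.mul_sum]
    rw [hcost]
    refine Finset.sum_le_sum fun t _ => ?_
    refine mul_le_mul_right ?_ (w t.1)
    -- the stage-t marginal of π is a feasible coupling for the stage-t problem
    have hrowm : ∀ x : X t.1, (∑ i, ∑ j, if i t = x then π i j else 0) = P t.1 x := by
      intro x
      obtain ⟨y0⟩ : Nonempty (Y t.1) := inferInstance
      have h2 := marg_row π t.2 x (P t.1 x) fun k l => (hcon t.1 t.2 k l x y0).1
      rw [hmass, mul_one] at h2
      exact h2
    have hcolm : ∀ y : Y t.1, (∑ i, ∑ j, if j t = y then π i j else 0) = Q t.1 y := by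
      intro y
      obtain ⟨x0⟩ : Nonempty (X t.1) := inferInstance
      have h2 := marg_col π t.2 y (Q t.1 y) fun k l => (hcon t.1 t.2 k l x0 y).2
      rw [hmass, mul_one] at h2
      exact h2
    refine csInf_le (OrderBot.bddBelow _)
      ⟨fun x y => ∑ i, ∑ j, (if i t = x ∧ j t = y then π i j else 0), ?_, ?_, ?_⟩
    · intro a
      rw [sum_rot3 (fun (b : Y t.1) (i : NDPath X T) (j : NDPath Y T) =>
        if i t = a ∧ j t = b then π i j else 0)]
      rw [← hrowm a]
      refine Finset.sum_congr rfl fun i _ => Finset.sum_congr rfl fun j _ => ?_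
      by_cases hia : i t = a <;> simp [hia]
    · intro b
      rw [sum_rot3 (fun (a : X t.1) (i : NDPath X T) (j : NDPath Y T) =>
        if i t = a ∧ j t = b then π i j else 0)]
      rw [← hcolm b]
      refine Finset.sum_congr rfl fun i _ => Finset.sum_congr rfl fun j _ => ?_
      by_cases hjb : j t = b <;> simp [hjb]
    · simp only [Finset.sum_mul, ite_mul, zero_mul]
      rw [sum_swap4 (fun (a : X t.1) (b : Y t.1) (i : NDPath X T) (j : NDPath Y T) =>
        if i t = a ∧ j t = b then π i j * dstage t.1 a b else 0)]
      refine Finset.sum_congr rfl fun i _ => Finset.sum_congr rfl fun j _ => ?_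
      have hb : ∀ a, (∑ b, if i t = a ∧ j t = b then π i j * dstage t.1 a b else 0)
          = if i t = a then π i j * dstage t.1 a (j t) else 0 := by
        intro a
        by_cases hia : i t = a <;> simp [hia]
      simp_rw [hb]
      simp
  -- conclude
  refine le_antisymm ?_ (le_csInf ?_ hlb)
  swap
  · choose πb hb1 hb2 using hPQplan
    exact ⟨_, hmem πb hb1 hb2⟩
  refine le_of_forall_pos_le_add fun ε hε => ?_
  have hch : ∀ t : Fin T, ∃ π : X t.1 → Y t.1 → ℝ≥0,
      (∀ a, (∑ b, π a b) = P t.1 a) ∧ (∀ b, (∑ a, π a b) = Q t.1 b) ∧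
      w t.1 * (∑ a, ∑ b, π a b * dstage t.1 a b)
        ≤ w t.1 * dW (P t.1) (Q t.1) (dstage t.1) + ε / T := by
    intro t
    by_cases hw : w t.1 = 0
    · obtain ⟨π, h1, h2⟩ := hPQplan t
      exact ⟨π, h1, h2, by simp [hw]⟩
    · have hWne : {v | ∃ π : X t.1 → Y t.1 → ℝ≥0,
          (∀ a, (∑ b, π a b) = P t.1 a) ∧ (∀ b, (∑ a, π a b) = Q t.1 b) ∧
          v = ∑ a, ∑ b, π a b * dstage t.1 a b}.Nonempty := by
        obtain ⟨π, h1, h2⟩ := hPQplan t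
        exact ⟨_, π, h1, h2, rfl⟩
      have hδ : 0 < ε / ((T : ℝ≥0) * w t.1) :=
        pos_iff_ne_zero.mpr (div_ne_zero hε.ne' (mul_ne_zero hT0 hw))
      have hlt : dW (P t.1) (Q t.1) (dstage t.1)
          < dW (P t.1) (Q t.1) (dstage t.1) + ε / ((T : ℝ≥0) * w t.1) :=
        lt_add_of_pos_right _ hδ
      obtain ⟨v, hvmem, hvlt⟩ := exists_lt_of_csInf_lt hWne hlt
      obtain ⟨π, h1, h2, rfl⟩ := hvmem
      refine ⟨π, h1, h2, ?_⟩
      calc w t.1 * (∑ a, ∑ b, π a b * dstage t.1 a b)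
          ≤ w t.1 * (dW (P t.1) (Q t.1) (dstage t.1) + ε / ((T : ℝ≥0) * w t.1)) :=
            mul_le_mul_right hvlt.le _
        _ = w t.1 * dW (P t.1) (Q t.1) (dstage t.1)
              + w t.1 * (ε / ((T : ℝ≥0) * w t.1)) := mul_add _ _ _
        _ = w t.1 * dW (P t.1) (Q t.1) (dstage t.1) + ε / T := by
            congr 1
            field_simp
  choose πc hr hcq hval using hch
  calc sInf Sset ≤ ∑ t : Fin T, w t.1 * ∑ x, ∑ y, πc t x y * dstage t.1 x y :=
        csInf_le (OrderBot.bddBelow _) (hmem πc hr hcq)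
    _ ≤ ∑ t : Fin T, (w t.1 * dW (P t.1) (Q t.1) (dstage t.1) + ε / T) :=
        Finset.sum_le_sum fun t _ => hval t
    _ = (∑ t : Fin T, w t.1 * dW (P t.1) (Q t.1) (dstage t.1)) + ∑ _t : Fin T, ε / T :=
        Finset.sum_add_distrib
    _ = (∑ t : Fin T, w t.1 * dW (P t.1) (Q t.1) (dstage t.1)) + ε := by
        congr 1
        rw [Finset.sum_const, Finset.card_univ, Fintype.card_fin, nsmul_eq_mul,
          mul_comm, div_mul_cancel₀ _ hT0]
end

section
/- Let T ≥ 1, let X_1,…,X_T and Y_1,…,Y_T be finite nonempty types, let P_t : X_t → ℝ≥0 and Q_t : Y_t → ℝ≥0 be probability vectors, let w_t ≥ 0 be weights and d_t : X_t × Y_t → ℝ≥0 stage costs, and let d(ξ,ζ) = Σ_{t=1}^T w_t · d_t(ξ_t, ζ_t). Then for every 0 ≤ t ≤ T and every stage-t prefix pair (k,l), the recursively defined sub-tree distance satisfies D_t(k,l) = Σ_{τ=1}^{t} w_τ · d_τ(k_τ, l_τ) + Σ_{τ=t+1}^{T} w_τ · d_W(P_τ, Q_τ; d_τ), where k_τ,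 l_τ denote the τ-th coordinates of the prefixes k and l. -/
open scoped NNReal Classical
open Finset

lemma sInf_image_affine (a b : ℝ≥0) {S : Set ℝ≥0} (hS : S.Nonempty) :
    sInf ((fun s => a + b * s) '' S) = a + b * sInf S := by
  have hm : Monotone (fun s : ℝ≥0 => a + b * s) := fun x y h =>
    add_le_add_right (mul_le_mul_right h b) a
  have hc : ContinuousAt (fun s : ℝ≥0 => a + b * s) (sInf S) :=
    (continuous_const.add (continuous_const.mul continuous_id)).continuousAt
  exact (Monotone.map_csInf_of_continuousAt hc hm hS (OrderBot.bddBelow S)).symm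

/-- For stagewise-independent trees and a separable path cost, the sub-tree
distance at a stage-`t` prefix pair `(k,l)` equals the weighted sum of the stage costs along
the prefixes plus the weighted sum of the Wasserstein distances of the remaining stages. -/
theorem subtreeDistance_eq_past_cost_add_sum_wasserstein
    (T : ℕ) (hT : 1 ≤ T) (X Y : ℕ → Type)
    [∀ n, Fintype (X n)] [∀ n, Nonempty (X n)]
    [∀ n, Fintype (Y n)] [∀ n, Nonempty (Y n)]
    (P : ∀ n, X n → ℝ≥0) (Q : ∀ n, Y n → ℝ≥0)
    (hP : ∀ t, t < T → ∑ x, P t x = 1) (hQ : ∀ t, t < T → ∑ y, Q t y = 1)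
    (w : ℕ → ℝ≥0) (dstage : ∀ n, X n → Y n → ℝ≥0)
    (t : ℕ) (ht : t ≤ T) (k : NDPre X t) (l : NDPre Y t) :
    NDsub T (fun s _ x => P s x) (fun s _ y => Q s y)
        (fun i j => ∑ s : Fin T, w s.1 * dstage s.1 (i s) (j s)) t k l
      = (∑ τ : Fin t, w τ.1 * dstage τ.1 (k τ) (l τ))
        + ∑ τ ∈ Finset.Ico t T, w τ * dW (P τ) (Q τ) (dstage τ) := by

  have main : ∀ n t, t ≤ T → T - t = n → ∀ (k : NDPre X t) (l : NDPre Y t),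
      NDsub T (fun s _ x => P s x) (fun s _ y => Q s y)
          (fun i j => ∑ s : Fin T, w s.1 * dstage s.1 (i s) (j s)) t k l
        = (∑ τ : Fin t, w τ.1 * dstage τ.1 (k τ) (l τ))
          + ∑ τ ∈ Finset.Ico t T, w τ * dW (P τ) (Q τ) (dstage τ) := by
    intro n
    induction n with
    | zero =>
      intro t ht hn k l
      obtain rfl : t = T := by omega
      rw [NDsub, dif_neg (lt_irrefl _)]
      simp
    | succ n ih =>
      intro t ht hn k l
      have htT : t < T := by omega
      rw [NDsub, dif_pos htT]
      set C := ∑ τ : Fin t, w τ.1 * dstage τ.1 (k τ) (l τ) with hC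
      set R := ∑ τ ∈ Finset.Ico (t+1) T, w τ * dW (P τ) (Q τ) (dstage τ) with hR
      have hIH : ∀ (x : X t) (y : Y t),
          NDsub T (fun s _ x => P s x) (fun s _ y => Q s y)
            (fun i j => ∑ s : Fin T, w s.1 * dstage s.1 (i s) (j s)) (t+1)
            (Fin.snoc k x) (Fin.snoc l y)
          = (C + R) + w t * dstage t x y := by
        intro x y
        rw [ih (t+1) (by omega) (by omega) (Fin.snoc k x) (Fin.snoc l y)]
        rw [Fin.sum_univ_castSucc]
        simp only [Fin.snoc_castSucc, Fin.snoc_last, Fin.coe_castSucc, Fin.val_last]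
        rw [← hC, ← hR]
        ring
      have hmass : ∀ π : X t → Y t → ℝ≥0, (∀ x, ∑ y, π x y = P t x) →
          (∑ x, ∑ y, π x y) = 1 := by
        intro π h; simp_rw [h]; exact hP t htT
      have key : ∀ π : X t → Y t → ℝ≥0, (∀ x, ∑ y, π x y = P t x) →
          (∑ x, ∑ y, π x y * ((C + R) + w t * dstage t x y))
            = (C + R) + w t * ∑ x, ∑ y, π x y * dstage t x y := by
        intro π h
        have e : ∀ x y, π x y * ((C + R) + w t * dstage t x y)
            = π x y * (C + R) + w t * (π x y * dstage t x y) := by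
          intro x y; ring
        simp_rw [e, Finset.sum_add_distrib, ← Finset.sum_mul, ← Finset.mul_sum]
        rw [hmass π h, one_mul]
      have hset :
          { v | ∃ π : X t → Y t → ℝ≥0,
              (∀ x, ∑ y, π x y = P t x) ∧ (∀ y, ∑ x, π x y = Q t y) ∧
              v = ∑ x, ∑ y, π x y *
                NDsub T (fun s _ x => P s x) (fun s _ y => Q s y)
                  (fun i j => ∑ s : Fin T, w s.1 * dstage s.1 (i s) (j s)) (t+1)
                  (Fin.snoc k x) (Fin.snoc l y) }
            = (fun s => (C + R) + w t * s) ''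
              { v | ∃ π : X t → Y t → ℝ≥0,
                (∀ x, ∑ y, π x y = P t x) ∧ (∀ y, ∑ x, π x y = Q t y) ∧
                v = ∑ x, ∑ y, π x y * dstage t x y } := by
        ext v
        constructor
        · rintro ⟨π, h1, h2, rfl⟩
          refine ⟨∑ x, ∑ y, π x y * dstage t x y, ⟨π, h1, h2, rfl⟩, ?_⟩
          simp only [hIH]
          exact (key π h1).symm
        · rintro ⟨s, ⟨π, h1, h2, rfl⟩, rfl⟩
          refine ⟨π, h1, h2, ?_⟩
          simp only [hIH]
          exact (key π h1).symm
      have hne : Set.Nonempty { v | ∃ π : X t → Y t → ℝ≥0,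
          (∀ x, ∑ y, π x y = P t x) ∧ (∀ y, ∑ x, π x y = Q t y) ∧
          v = ∑ x, ∑ y, π x y * dstage t x y } := by
        refine ⟨_, fun x y => P t x * Q t y, ?_, ?_, rfl⟩
        · intro x; rw [← Finset.mul_sum, hQ t htT, mul_one]
        · intro y; rw [← Finset.sum_mul, hP t htT, one_mul]
      rw [hset, sInf_image_affine _ _ hne]
      rw [Finset.sum_eq_sum_Ico_succ_bot htT]
      rw [show sInf { v | ∃ π : X t → Y t → ℝ≥0,
          (∀ x, ∑ y, π x y = P t x) ∧ (∀ y, ∑ x, π x y = Q t y) ∧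
          v = ∑ x, ∑ y, π x y * dstage t x y } = dW (P t) (Q t) (dstage t) from rfl]
      rw [← hR]
      ring
  exact main (T - t) t ht rfl k l
end

section
/- Let T ≥ 1, let X_1,…,X_T and Y_1,…,Y_T be finite nonempty types, and let two (general) scenario trees be given by conditional probabilities p_t and q_t. For any fixed π : X×Y → ℝ≥0, the following two families of constraints are equivalent: (i) for every 0 ≤ t < T, every stage-t prefix pair (k,l), and every full path i extending k: Σ over paths j extending l of π(i,j) = P(i|k)·π_{k,l}; (ii) for every 0 ≤ t < T, every stage-t prefix pair (k,l), and every x ∈ X_{t+1}: Σ_{y ∈ Y_{t+1}} π_{k·x, l·y} = p_{t+1}(k,x)·π_{k,l}. -/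
open scoped NNReal Classical
open Finset

lemma extends_snoc_iff {X : ℕ → Type} {T t : ℕ} (ht : t < T) (i : NDPath X T)
    (k : NDPre X t) (x : X t) :
    NDExtends i (Fin.snoc k x) ↔ NDExtends i k ∧ i ⟨t, ht⟩ = x := by
  constructor
  · intro h
    refine ⟨fun τ hτ => ?_, ?_⟩
    · have h1 := h ⟨τ.1, Nat.lt_succ_of_lt τ.2⟩ hτ
      rw [h1]
      simp [Fin.snoc, τ.2]
    · have h2 := h ⟨t, Nat.lt_succ_self t⟩ ht
      rw [h2]
      simp [Fin.snoc]
  · rintro ⟨h1, h2⟩ τ hτ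
    rcases Nat.lt_or_ge τ.1 t with hlt | hge
    · have h3 := h1 ⟨τ.1, hlt⟩ hτ
      simp only [Fin.snoc, hlt, dif_pos]
      exact h3
    · have heq : τ = Fin.last t := Fin.ext (le_antisymm (Nat.lt_succ_iff.mp τ.2) hge)
      subst heq
      rw [Fin.snoc_last]
      exact h2

lemma extends_full_iff {X : ℕ → Type} {T : ℕ} (i : NDPath X T) (k : NDPre X T) :
    NDExtends i k ↔ i = k := by
  constructor
  · intro h; funext τ; have := h τ τ.2; simpa using this
  · rintro rfl τ h; rfl

/-- partition of extensions of `l` according to the next coordinate -/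
lemma sum_extends_snoc {Y : ℕ → Type} [∀ n, Fintype (Y n)] {T t : ℕ} (ht : t < T)
    (l : NDPre Y t) (f : NDPath Y T → ℝ≥0) :
    (∑ j : NDPath Y T, if NDExtends j l then f j else 0)
      = ∑ y : Y t, ∑ j : NDPath Y T, if NDExtends j (Fin.snoc l y) then f j else 0 := by
  rw [Finset.sum_comm]
  refine Finset.sum_congr rfl fun j _ => ?_
  by_cases hj : NDExtends j l
  · simp only [extends_snoc_iff ht, hj, true_and, if_pos]
    simp
  · simp [extends_snoc_iff ht, hj]

lemma condP_succ {X : ℕ → Type} {T : ℕ} (p : ∀ t, NDPre X t → X t → ℝ≥0)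
    {t : ℕ} (ht : t < T) (i : NDPath X T) (k : NDPre X t) (hik : NDExtends i k) :
    NDcondP p t i = p t k (i ⟨t, ht⟩) * NDcondP p (t+1) i := by
  unfold NDcondP
  rw [Finset.prod_eq_prod_Ico_succ_bot ht]
  congr 1
  rw [dif_pos ht]
  congr 1
  funext s
  exact hik s (lt_trans s.2 ht)

lemma condP_last {X : ℕ → Type} {T : ℕ} (p : ∀ t, NDPre X t → X t → ℝ≥0)
    (i : NDPath X T) : NDcondP p T i = 1 := by
  unfold NDcondP; simp

/-- total conditional mass of extensions of a prefix is 1 -/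
lemma sum_condP_extends {X : ℕ → Type} [∀ n, Fintype (X n)] {T : ℕ}
    (p : ∀ t, NDPre X t → X t → ℝ≥0)
    (hp : ∀ t, t < T → ∀ k, ∑ x, p t k x = 1) :
    ∀ n t, T - t = n → t ≤ T → ∀ k : NDPre X t,
      (∑ i : NDPath X T, if NDExtends i k then NDcondP p t i else 0) = 1 := by
  intro n
  induction n with
  | zero =>
    intro t hn htT k
    have hTt : t = T := by omega
    subst hTt
    simp only [extends_full_iff, condP_last]
    simp
  | succ m ih =>
    intro t hn htT k
    have ht : t < T := by omega
    rw [sum_extends_snoc ht k (NDcondP p t)]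
    have key : ∀ x : X t,
        (∑ i : NDPath X T, if NDExtends i (Fin.snoc k x) then NDcondP p t i else 0)
          = p t k x := by
      intro x
      have step : ∀ i : NDPath X T, (if NDExtends i (Fin.snoc k x) then NDcondP p t i else 0)
          = p t k x * (if NDExtends i (Fin.snoc k x) then NDcondP p (t+1) i else 0) := by
        intro i
        by_cases h : NDExtends i (Fin.snoc k x)
        · rw [if_pos h, if_pos h]
          obtain ⟨h1, h2⟩ := (extends_snoc_iff ht i k x).mp h
          rw [condP_succ p ht i k h1, h2]
        · simp [h]
      rw [Finset.sum_congr rfl fun i _ => step i, ← Finset.mul_sum,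
        ih (t+1) (by omega) (by omega) (Fin.snoc k x), mul_one]
    rw [Finset.sum_congr rfl fun x _ => key x]
    exact hp t ht k

/-- subtree weight as an iterated conditional sum -/
lemma subw_eq {X Y : ℕ → Type} {T : ℕ} [∀ n, Fintype (X n)] [∀ n, Fintype (Y n)]
    (π : NDPath X T → NDPath Y T → ℝ≥0) (t : ℕ) (k : NDPre X t) (l : NDPre Y t) :
    NDsubw π t k l = ∑ i : NDPath X T,
      (if NDExtends i k then (∑ j : NDPath Y T, if NDExtends j l then π i j else 0) else 0) := by
  unfold NDsubw
  refine Finset.sum_congr rfl fun i _ => ?_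
  by_cases h : NDExtends i k <;> simp [h]

lemma sum_condP_snoc {X : ℕ → Type} [∀ n, Fintype (X n)] {T : ℕ}
    (p : ∀ t, NDPre X t → X t → ℝ≥0)
    (hp : ∀ t, t < T → ∀ k, ∑ x, p t k x = 1)
    {t : ℕ} (ht : t < T) (k : NDPre X t) (x : X t) :
    (∑ i : NDPath X T, if NDExtends i (Fin.snoc k x) then NDcondP p t i else 0) = p t k x := by
  have step : ∀ i : NDPath X T, (if NDExtends i (Fin.snoc k x) then NDcondP p t i else 0)
      = p t k x * (if NDExtends i (Fin.snoc k x) then NDcondP p (t+1) i else 0) := by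
    intro i
    by_cases h : NDExtends i (Fin.snoc k x)
    · rw [if_pos h, if_pos h]
      obtain ⟨h1, h2⟩ := (extends_snoc_iff ht i k x).mp h
      rw [condP_succ p ht i k h1, h2]
    · simp [h]
  rw [Finset.sum_congr rfl fun i _ => step i, ← Finset.mul_sum,
    sum_condP_extends p hp (T - (t+1)) (t+1) rfl (by omega) (Fin.snoc k x), mul_one]

lemma subw_last {X Y : ℕ → Type} {T : ℕ} [∀ n, Fintype (X n)] [∀ n, Fintype (Y n)]
    (π : NDPath X T → NDPath Y T → ℝ≥0) (k : NDPre X T) (l : NDPre Y T) :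
    NDsubw π T k l = ∑ j : NDPath Y T, if NDExtends j l then π k j else 0 := by
  rw [subw_eq]
  simp [extends_full_iff]

/-- For a fixed transport plan `π` on path pairs, the conditional marginal
constraints written with leaf (full-path) sums are equivalent to the constraints written in
successor form. -/
theorem leaf_constraints_iff_successor_constraints
    (T : ℕ) (hT : 1 ≤ T) (X Y : ℕ → Type)
    [∀ n, Fintype (X n)] [∀ n, Nonempty (X n)]
    [∀ n, Fintype (Y n)] [∀ n, Nonempty (Y n)]
    (p : ∀ t, NDPre X t → X t → ℝ≥0) (q : ∀ t, NDPre Y t → Y t → ℝ≥0)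
    (hp : ∀ t, t < T → ∀ k, ∑ x, p t k x = 1)
    (hq : ∀ t, t < T → ∀ l, ∑ y, q t l y = 1)
    (π : NDPath X T → NDPath Y T → ℝ≥0) :
    (∀ t, t < T → ∀ (k : NDPre X t) (l : NDPre Y t) (i : NDPath X T),
        NDExtends i k →
        (∑ j : NDPath Y T, if NDExtends j l then π i j else 0)
          = NDcondP p t i * NDsubw π t k l)
    ↔
    (∀ t, t < T → ∀ (k : NDPre X t) (l : NDPre Y t) (x : X t),
        (∑ y : Y t, NDsubw π (t+1) (Fin.snoc k x) (Fin.snoc l y))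
          = p t k x * NDsubw π t k l) := by

  constructor
  · intro H t ht k l x
    have h1 : (∑ y : Y t, NDsubw π (t+1) (Fin.snoc k x) (Fin.snoc l y))
        = ∑ y : Y t, ∑ i : NDPath X T, if NDExtends i (Fin.snoc k x)
            then (∑ j : NDPath Y T, if NDExtends j (Fin.snoc l y) then π i j else 0) else 0 :=
      Finset.sum_congr rfl fun y _ => subw_eq π (t+1) (Fin.snoc k x) (Fin.snoc l y)
    rw [h1, Finset.sum_comm]
    have inner : ∀ i : NDPath X T,
        (∑ y : Y t, if NDExtends i (Fin.snoc k x)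
            then (∑ j : NDPath Y T, if NDExtends j (Fin.snoc l y) then π i j else 0) else 0)
        = (if NDExtends i (Fin.snoc k x) then NDcondP p t i else 0) * NDsubw π t k l := by
      intro i
      by_cases h : NDExtends i (Fin.snoc k x)
      · simp only [h, if_true]
        rw [← sum_extends_snoc ht l (π i)]
        exact H t ht k l i ((extends_snoc_iff ht i k x).mp h).1
      · simp [h]
    rw [Finset.sum_congr rfl fun i _ => inner i, ← Finset.sum_mul,
      sum_condP_snoc p hp ht k x]
  · intro S
    have key : ∀ n t, T - t = n → t ≤ T →
        ∀ (k : NDPre X t) (l : NDPre Y t) (i : NDPath X T),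
        NDExtends i k →
        (∑ j : NDPath Y T, if NDExtends j l then π i j else 0)
          = NDcondP p t i * NDsubw π t k l := by
      intro n
      induction n with
      | zero =>
        intro t hn htT k l i hik
        have hTt : t = T := by omega
        subst hTt
        rw [condP_last, subw_last, one_mul, (extends_full_iff i k).mp hik]
      | succ m ih =>
        intro t hn htT k l i hik
        have ht : t < T := by omega
        have hixk : NDExtends i (Fin.snoc k (i ⟨t, ht⟩)) :=
          (extends_snoc_iff ht i k (i ⟨t, ht⟩)).mpr ⟨hik, rfl⟩
        have h1 : (∑ y : Y t, ∑ j : NDPath Y T,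
              if NDExtends j (Fin.snoc l y) then π i j else 0)
            = ∑ y : Y t, NDcondP p (t+1) i
                * NDsubw π (t+1) (Fin.snoc k (i ⟨t, ht⟩)) (Fin.snoc l y) :=
          Finset.sum_congr rfl fun y _ =>
            ih (t+1) (by omega) (by omega) (Fin.snoc k (i ⟨t, ht⟩)) (Fin.snoc l y) i hixk
        rw [sum_extends_snoc ht l (π i), h1, ← Finset.mul_sum, S t ht k l (i ⟨t, ht⟩),
          condP_succ p ht i k hik]
        ring
    intro t ht k l i hik
    exact key (T - t) t rfl (by omega) k l i hik
end

section
/- Let T ≥ 1, let X_1,…,X_T and Y_1,…,Y_T be finite nonempty types, let two (general) scenario trees be given by conditional probabilities p_t and q_t, and let d : X×Y → ℝ≥0 be a cost on path pairs. Then the two dynamic-programming formulations of the nested distance coincide: for every 0 ≤ t ≤ T, every stage-t prefix pair (k,l) and every m ≥ 0, Φ_t(k,l,m) = m·D_t(k,l). -/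
open scoped NNReal Classical
open Finset

lemma ND_sInf_image_mul (m : ℝ≥0) {S : Set ℝ≥0} (hS : S.Nonempty) :
    sInf ((fun v => m * v) '' S) = m * sInf S := by
  rcases eq_or_ne m 0 with rfl | hm
  · simp [zero_mul, hS.image_const]
  · have hm' : 0 < m := zero_lt_iff.2 hm
    refine le_antisymm ?_ ?_
    · rw [mul_comm, ← div_le_iff₀ hm']
      apply le_csInf hS
      intro v hv
      rw [div_le_iff₀ hm', mul_comm]
      exact csInf_le (OrderBot.bddBelow _) ⟨v, hv, rfl⟩
    · apply le_csInf (hS.image _)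
      rintro _ ⟨v, hv, rfl⟩
      exact mul_le_mul_right (csInf_le (OrderBot.bddBelow _) hv) m

/-- The two dynamic-programming formulations of the nested distance
coincide: `Φ_t(k,l,m) = m · D_t(k,l)`. -/
theorem Phi_eq_mass_mul_subtreeDistance
    (T : ℕ) (hT : 1 ≤ T) (X Y : ℕ → Type)
    [∀ n, Fintype (X n)] [∀ n, Nonempty (X n)]
    [∀ n, Fintype (Y n)] [∀ n, Nonempty (Y n)]
    (p : ∀ t, NDPre X t → X t → ℝ≥0) (q : ∀ t, NDPre Y t → Y t → ℝ≥0)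
    (hp : ∀ t, t < T → ∀ k, ∑ x, p t k x = 1)
    (hq : ∀ t, t < T → ∀ l, ∑ y, q t l y = 1)
    (d : NDPath X T → NDPath Y T → ℝ≥0)
    (t : ℕ) (ht : t ≤ T) (k : NDPre X t) (l : NDPre Y t) (m : ℝ≥0) :
    NDPhi T p q d t k l m = m * NDsub T p q d t k l := by
  clear hT
  have key : ∀ n t, T - t = n → t ≤ T → ∀ (k : NDPre X t) (l : NDPre Y t) (m : ℝ≥0),
      NDPhi T p q d t k l m = m * NDsub T p q d t k l := by
    intro n
    induction n with
    | zero =>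
      intro t hn ht k l m
      have h : ¬ t < T := by omega
      rw [NDPhi, NDsub, dif_neg h, dif_neg h]
    | succ n ih =>
      intro t hn ht k l m
      have h : t < T := by omega
      have hIH : ∀ (x : X t) (y : Y t) (c : ℝ≥0),
          NDPhi T p q d (t+1) (Fin.snoc k x) (Fin.snoc l y) c
            = c * NDsub T p q d (t+1) (Fin.snoc k x) (Fin.snoc l y) :=
        fun x y c => ih (t+1) (by omega) (by omega) _ _ c
      rw [NDPhi, NDsub, dif_pos h, dif_pos h]
      simp only [hIH, Fin.val_last]
      set D : X t → Y t → ℝ≥0 :=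
        fun x y => NDsub T p q d (t+1) (Fin.snoc k x) (Fin.snoc l y) with hD
      -- the unit-mass feasible set is nonempty (product coupling)
      have hrow0 : ∀ x : X t, ∑ y, p t k x * q t l y = p t k x := by
        intro x; rw [← Finset.mul_sum, hq t h l, mul_one]
      have hcol0 : ∀ y : Y t, ∑ x, p t k x * q t l y = q t l y := by
        intro y; rw [← Finset.sum_mul, hp t h k, one_mul]
      have hS : Set.Nonempty { v | ∃ π : X t → Y t → ℝ≥0,
          (∀ x, ∑ y, π x y = p t k x) ∧ (∀ y, ∑ x, π x y = q t l y) ∧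
          v = ∑ x, ∑ y, π x y * D x y } :=
        ⟨_, fun x y => p t k x * q t l y, hrow0, hcol0, rfl⟩
      have hset : { v | ∃ π : X t → Y t → ℝ≥0,
            (∀ x, ∑ y, π x y = p t k x * m) ∧ (∀ y, ∑ x, π x y = q t l y * m) ∧
            v = ∑ x, ∑ y, π x y * D x y }
          = (fun v => m * v) '' { v | ∃ π : X t → Y t → ℝ≥0,
            (∀ x, ∑ y, π x y = p t k x) ∧ (∀ y, ∑ x, π x y = q t l y) ∧
            v = ∑ x, ∑ y, π x y * D x y } := by
        ext v
        constructor
        · rintro ⟨π, hr, hc, rfl⟩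
          rcases eq_or_ne m 0 with rfl | hm
          · have hπ0 : ∀ x y, π x y = 0 := by
              intro x y
              have h1 : π x y ≤ ∑ y', π x y' :=
                Finset.single_le_sum (fun _ _ => zero_le) (Finset.mem_univ y)
              rw [hr x, mul_zero] at h1
              exact le_antisymm h1 zero_le
            refine ⟨_, ⟨fun x y => p t k x * q t l y, hrow0, hcol0, rfl⟩, ?_⟩
            simp [hπ0]
          · refine ⟨∑ x, ∑ y, (π x y / m) * D x y,
              ⟨fun x y => π x y / m, ?_, ?_, rfl⟩, ?_⟩
            · intro x
              rw [← Finset.sum_div, hr x, mul_div_cancel_right₀ _ hm]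
            · intro y
              rw [← Finset.sum_div, hc y, mul_div_cancel_right₀ _ hm]
            · simp only [Finset.mul_sum]
              refine Finset.sum_congr rfl fun x _ => Finset.sum_congr rfl fun y _ => ?_
              rw [← mul_assoc, mul_comm m (π x y / m), div_mul_cancel₀ _ hm]
        · rintro ⟨v, ⟨σ, hr, hc, rfl⟩, rfl⟩
          refine ⟨fun x y => m * σ x y, ?_, ?_, ?_⟩
          · intro x; rw [← Finset.mul_sum, hr x, mul_comm]
          · intro y; rw [← Finset.mul_sum, hc y, mul_comm]
          · simp only [Finset.mul_sum, mul_assoc]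
      rw [hset, ND_sInf_image_mul m hS]
  exact key (T - t) t rfl ht k l m
end

section
/- Let A_1, A_2, B_1, B_2 be finite nonempty types, let P_1 : A_1 → ℝ≥0, P_2 : A_2 → ℝ≥0, Q_1 : B_1 → ℝ≥0, Q_2 : B_2 → ℝ≥0 be probability vectors, and let c_1 : A_1×B_1 → ℝ≥0 and c_2 : A_2×B_2 → ℝ≥0 be costs. Define the product probability vectors (P_1⊗P_2)(a_1,a_2) := P_1(a_1)·P_2(a_2) and (Q_1⊗Q_2)(b_1,b_2) := Q_1(b_1)·Q_2(b_2), and the additive cost c((a_1,a_2),(b_1,b_2)) := c_1(a_1,b_1) + c_2(a_2,b_2). Then d_W(P_1⊗P_2, Q_1⊗Q_2; c) = d_W(P_1,Q_1;c_1) + d_W(P_2,Q_2;c_2). -/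
open scoped NNReal Classical
open Finset

noncomputable section

section DWAux
open Finset
variable {α β γ δ : Type*} [Fintype α] [Fintype β] [Fintype γ] [Fintype δ]

private lemma dW_comm3 {M : Type*} [AddCommMonoid M] (f : α → β → γ → M) :
    ∑ a, ∑ b, ∑ c, f a b c = ∑ c, ∑ a, ∑ b, f a b c := by
  have h : ∀ a, (∑ b, ∑ c, f a b c) = ∑ c, ∑ b, f a b c := fun a => Finset.sum_comm
  simp_rw [h]
  exact Finset.sum_comm

private lemma dW_comm4 {M : Type*} [AddCommMonoid M] (f : α → β → γ → δ → M) :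
    ∑ a, ∑ b, ∑ c, ∑ d, f a b c d = ∑ c, ∑ d, ∑ a, ∑ b, f a b c d := by
  have h1 : ∑ x : (α × β) × (γ × δ), f x.1.1 x.1.2 x.2.1 x.2.2
      = ∑ a, ∑ b, ∑ c, ∑ d, f a b c d := by
    simp only [Fintype.sum_prod_type]
  have h2 : ∑ x : (γ × δ) × (α × β), f x.2.1 x.2.2 x.1.1 x.1.2
      = ∑ c, ∑ d, ∑ a, ∑ b, f a b c d := by
    simp only [Fintype.sum_prod_type]
  rw [← h1, ← h2]
  exact Fintype.sum_equiv (Equiv.prodComm _ _) _ _ (fun x => rfl)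

private lemma dW_sum4_factor (f : α → β → NNReal) (g : γ → δ → NNReal) :
    ∑ a : α × γ, ∑ b : β × δ, f a.1 b.1 * g a.2 b.2
      = (∑ a, ∑ b, f a b) * (∑ c, ∑ d, g c d) := by
  simp only [Fintype.sum_prod_type, Finset.sum_mul_sum]

end DWAux

end
set_option maxHeartbeats 1600000 in
/-- The Wasserstein value of product probability vectors with an additive
cost splits as the sum of the two Wasserstein values. -/
theorem dW_prod_add_cost
    (A₁ A₂ B₁ B₂ : Type*)
    [Fintype A₁] [Nonempty A₁] [Fintype A₂] [Nonempty A₂]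
    [Fintype B₁] [Nonempty B₁] [Fintype B₂] [Nonempty B₂]
    (P₁ : A₁ → ℝ≥0) (P₂ : A₂ → ℝ≥0) (Q₁ : B₁ → ℝ≥0) (Q₂ : B₂ → ℝ≥0)
    (hP₁ : ∑ a, P₁ a = 1) (hP₂ : ∑ a, P₂ a = 1)
    (hQ₁ : ∑ b, Q₁ b = 1) (hQ₂ : ∑ b, Q₂ b = 1)
    (c₁ : A₁ → B₁ → ℝ≥0) (c₂ : A₂ → B₂ → ℝ≥0) :
    dW (fun a : A₁ × A₂ => P₁ a.1 * P₂ a.2) (fun b : B₁ × B₂ => Q₁ b.1 * Q₂ b.2)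
        (fun a b => c₁ a.1 b.1 + c₂ a.2 b.2)
      = dW P₁ Q₁ c₁ + dW P₂ Q₂ c₂ := by
  classical
  unfold dW
  set S₁ : Set ℝ≥0 := { v | ∃ π : A₁ → B₁ → ℝ≥0,
    (∀ a, ∑ b, π a b = P₁ a) ∧ (∀ b, ∑ a, π a b = Q₁ b) ∧
    v = ∑ a, ∑ b, π a b * c₁ a b } with hS₁def
  set S₂ : Set ℝ≥0 := { v | ∃ π : A₂ → B₂ → ℝ≥0,
    (∀ a, ∑ b, π a b = P₂ a) ∧ (∀ b, ∑ a, π a b = Q₂ b) ∧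
    v = ∑ a, ∑ b, π a b * c₂ a b } with hS₂def
  set S : Set ℝ≥0 := { v | ∃ π : (A₁ × A₂) → (B₁ × B₂) → ℝ≥0,
    (∀ a : A₁ × A₂, ∑ b, π a b = P₁ a.1 * P₂ a.2) ∧
    (∀ b : B₁ × B₂, ∑ a, π a b = Q₁ b.1 * Q₂ b.2) ∧
    v = ∑ a, ∑ b, π a b * (c₁ a.1 b.1 + c₂ a.2 b.2) } with hSdef
  have hQprod : ∑ b : B₁ × B₂, Q₁ b.1 * Q₂ b.2 = 1 := by
    rw [Fintype.sum_prod_type, ← Finset.sum_mul_sum, hQ₁, hQ₂, mul_one]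
  have hPprod : ∑ a : A₁ × A₂, P₁ a.1 * P₂ a.2 = 1 := by
    rw [Fintype.sum_prod_type, ← Finset.sum_mul_sum, hP₁, hP₂, mul_one]
  have hS₁ne : S₁.Nonempty := by
    refine ⟨_, ⟨fun a b => P₁ a * Q₁ b, fun a => ?_, fun b => ?_, rfl⟩⟩
    · rw [← Finset.mul_sum, hQ₁, mul_one]
    · rw [← Finset.sum_mul, hP₁, one_mul]
  have hS₂ne : S₂.Nonempty := by
    refine ⟨_, ⟨fun a b => P₂ a * Q₂ b, fun a => ?_, fun b => ?_, rfl⟩⟩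
    · rw [← Finset.mul_sum, hQ₂, mul_one]
    · rw [← Finset.sum_mul, hP₂, one_mul]
  have hSne : S.Nonempty := by
    refine ⟨_, ⟨fun a b => (P₁ a.1 * P₂ a.2) * (Q₁ b.1 * Q₂ b.2),
      fun a => ?_, fun b => ?_, rfl⟩⟩
    · rw [← Finset.mul_sum, hQprod, mul_one]
    · rw [← Finset.sum_mul, hPprod, one_mul]
  have prodMem : ∀ v₁ ∈ S₁, ∀ v₂ ∈ S₂, v₁ + v₂ ∈ S := by
    rintro v₁ ⟨π₁, h1a, h1b, rfl⟩ v₂ ⟨π₂, h2a, h2b, rfl⟩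
    refine ⟨fun a b => π₁ a.1 b.1 * π₂ a.2 b.2, fun a => ?_, fun b => ?_, ?_⟩
    · rw [Fintype.sum_prod_type]
      simp_rw [← Finset.mul_sum, h2a, ← Finset.sum_mul, h1a]
    · rw [Fintype.sum_prod_type]
      simp_rw [← Finset.mul_sum, h2b, ← Finset.sum_mul, h1b]
    · have e1 : ∑ a : A₁ × A₂, ∑ b : B₁ × B₂,
          π₁ a.1 b.1 * π₂ a.2 b.2 * c₁ a.1 b.1 = ∑ a, ∑ b, π₁ a b * c₁ a b := by
        calc ∑ a : A₁ × A₂, ∑ b : B₁ × B₂, π₁ a.1 b.1 * π₂ a.2 b.2 * c₁ a.1 b.1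
            = ∑ a : A₁ × A₂, ∑ b : B₁ × B₂,
                (π₁ a.1 b.1 * c₁ a.1 b.1) * π₂ a.2 b.2 :=
              Finset.sum_congr rfl fun a _ => Finset.sum_congr rfl fun b _ =>
                mul_right_comm _ _ _
          _ = (∑ a, ∑ b, π₁ a b * c₁ a b) * (∑ a, ∑ b, π₂ a b) :=
              dW_sum4_factor (fun a b => π₁ a b * c₁ a b) (fun a b => π₂ a b)
          _ = ∑ a, ∑ b, π₁ a b * c₁ a b := by simp_rw [h2a]; rw [hP₂, mul_one]
      have e2 : ∑ a : A₁ × A₂, ∑ b : B₁ × B₂,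
          π₁ a.1 b.1 * π₂ a.2 b.2 * c₂ a.2 b.2 = ∑ a, ∑ b, π₂ a b * c₂ a b := by
        calc ∑ a : A₁ × A₂, ∑ b : B₁ × B₂, π₁ a.1 b.1 * π₂ a.2 b.2 * c₂ a.2 b.2
            = ∑ a : A₁ × A₂, ∑ b : B₁ × B₂,
                π₁ a.1 b.1 * (π₂ a.2 b.2 * c₂ a.2 b.2) := by simp_rw [mul_assoc]
          _ = (∑ a, ∑ b, π₁ a b) * (∑ a, ∑ b, π₂ a b * c₂ a b) :=
              dW_sum4_factor (fun a b => π₁ a b) (fun a b => π₂ a b * c₂ a b)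
          _ = ∑ a, ∑ b, π₂ a b * c₂ a b := by simp_rw [h1a]; rw [hP₁, one_mul]
      simp_rw [mul_add, Finset.sum_add_distrib]
      rw [e1, e2]
  apply le_antisymm
  · rw [← tsub_le_iff_left]
    refine le_csInf hS₂ne fun v₂ hv₂ => ?_
    rw [tsub_le_iff_left, ← tsub_le_iff_right]
    refine le_csInf hS₁ne fun v₁ hv₁ => ?_
    rw [tsub_le_iff_right]
    exact csInf_le (OrderBot.bddBelow _) (prodMem v₁ hv₁ v₂ hv₂)
  · refine le_csInf hSne ?_
    rintro v ⟨π, ha, hb, rfl⟩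
    set π₁ : A₁ → B₁ → ℝ≥0 := fun a₁ b₁ => ∑ a₂, ∑ b₂, π (a₁, a₂) (b₁, b₂) with hπ₁
    set π₂ : A₂ → B₂ → ℝ≥0 := fun a₂ b₂ => ∑ a₁, ∑ b₁, π (a₁, a₂) (b₁, b₂) with hπ₂
    have m1a : ∀ a₁, ∑ b₁, π₁ a₁ b₁ = P₁ a₁ := by
      intro a₁
      calc ∑ b₁, π₁ a₁ b₁
          = ∑ a₂, ∑ b₁, ∑ b₂, π (a₁, a₂) (b₁, b₂) := Finset.sum_comm
        _ = ∑ a₂, ∑ b : B₁ × B₂, π (a₁, a₂) b := by simp_rw [Fintype.sum_prod_type]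
        _ = ∑ a₂, P₁ a₁ * P₂ a₂ := by simp_rw [ha]
        _ = P₁ a₁ := by rw [← Finset.mul_sum, hP₂, mul_one]
    have m1b : ∀ b₁, ∑ a₁, π₁ a₁ b₁ = Q₁ b₁ := by
      intro b₁
      calc ∑ a₁, π₁ a₁ b₁
          = ∑ b₂, ∑ a₁, ∑ a₂, π (a₁, a₂) (b₁, b₂) :=
            dW_comm3 (fun a₁ a₂ b₂ => π (a₁, a₂) (b₁, b₂))
        _ = ∑ b₂, ∑ a : A₁ × A₂, π a (b₁, b₂) := by simp_rw [Fintype.sum_prod_type]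
        _ = ∑ b₂, Q₁ b₁ * Q₂ b₂ := by simp_rw [hb]
        _ = Q₁ b₁ := by rw [← Finset.mul_sum, hQ₂, mul_one]
    have m2a : ∀ a₂, ∑ b₂, π₂ a₂ b₂ = P₂ a₂ := by
      intro a₂
      calc ∑ b₂, π₂ a₂ b₂
          = ∑ a₁, ∑ b₁, ∑ b₂, π (a₁, a₂) (b₁, b₂) :=
            (dW_comm3 (fun a₁ b₁ b₂ => π (a₁, a₂) (b₁, b₂))).symm
        _ = ∑ a₁, ∑ b : B₁ × B₂, π (a₁, a₂) b := by simp_rw [Fintype.sum_prod_type]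
        _ = ∑ a₁, P₁ a₁ * P₂ a₂ := by simp_rw [ha]
        _ = P₂ a₂ := by rw [← Finset.sum_mul, hP₁, one_mul]
    have m2b : ∀ b₂, ∑ a₂, π₂ a₂ b₂ = Q₂ b₂ := by
      intro b₂
      calc ∑ a₂, π₂ a₂ b₂
          = ∑ b₁, ∑ a₂, ∑ a₁, π (a₁, a₂) (b₁, b₂) :=
            dW_comm3 (fun a₂ a₁ b₁ => π (a₁, a₂) (b₁, b₂))
        _ = ∑ b₁, ∑ a₁, ∑ a₂, π (a₁, a₂) (b₁, b₂) :=
            Finset.sum_congr rfl fun _ _ => Finset.sum_comm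
        _ = ∑ b₁, ∑ a : A₁ × A₂, π a (b₁, b₂) := by simp_rw [Fintype.sum_prod_type]
        _ = ∑ b₁, Q₁ b₁ * Q₂ b₂ := by simp_rw [hb]
        _ = Q₂ b₂ := by rw [← Finset.sum_mul, hQ₁, one_mul]
    have t1 : ∑ a₁, ∑ b₁, π₁ a₁ b₁ * c₁ a₁ b₁
        = ∑ a₁, ∑ a₂, ∑ b₁, ∑ b₂, π (a₁, a₂) (b₁, b₂) * c₁ a₁ b₁ := by
      refine Finset.sum_congr rfl fun a₁ _ => ?_
      calc ∑ b₁, π₁ a₁ b₁ * c₁ a₁ b₁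
          = ∑ b₁, ∑ a₂, ∑ b₂, π (a₁, a₂) (b₁, b₂) * c₁ a₁ b₁ := by
            simp_rw [hπ₁, Finset.sum_mul]
        _ = ∑ a₂, ∑ b₁, ∑ b₂, π (a₁, a₂) (b₁, b₂) * c₁ a₁ b₁ := Finset.sum_comm
    have t2 : ∑ a₂, ∑ b₂, π₂ a₂ b₂ * c₂ a₂ b₂
        = ∑ a₁, ∑ a₂, ∑ b₁, ∑ b₂, π (a₁, a₂) (b₁, b₂) * c₂ a₂ b₂ := by
      calc ∑ a₂, ∑ b₂, π₂ a₂ b₂ * c₂ a₂ b₂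
          = ∑ a₂, ∑ b₂, ∑ a₁, ∑ b₁, π (a₁, a₂) (b₁, b₂) * c₂ a₂ b₂ := by
            simp_rw [hπ₂, Finset.sum_mul]
        _ = ∑ a₁, ∑ b₁, ∑ a₂, ∑ b₂, π (a₁, a₂) (b₁, b₂) * c₂ a₂ b₂ :=
            dW_comm4 (fun a₂ b₂ a₁ b₁ => π (a₁, a₂) (b₁, b₂) * c₂ a₂ b₂)
        _ = ∑ a₁, ∑ a₂, ∑ b₁, ∑ b₂, π (a₁, a₂) (b₁, b₂) * c₂ a₂ b₂ :=
            Finset.sum_congr rfl fun _ _ => Finset.sum_comm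
    have hsplit : (∑ a₁, ∑ b₁, π₁ a₁ b₁ * c₁ a₁ b₁)
          + (∑ a₂, ∑ b₂, π₂ a₂ b₂ * c₂ a₂ b₂)
        = ∑ a : A₁ × A₂, ∑ b : B₁ × B₂, π a b * (c₁ a.1 b.1 + c₂ a.2 b.2) := by
      rw [t1, t2]
      simp only [Fintype.sum_prod_type, mul_add, Finset.sum_add_distrib]
    calc sInf S₁ + sInf S₂
        ≤ (∑ a₁, ∑ b₁, π₁ a₁ b₁ * c₁ a₁ b₁)
            + (∑ a₂, ∑ b₂, π₂ a₂ b₂ * c₂ a₂ b₂) :=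
          add_le_add (csInf_le (OrderBot.bddBelow _) ⟨π₁, m1a, m1b, rfl⟩)
            (csInf_le (OrderBot.bddBelow _) ⟨π₂, m2a, m2b, rfl⟩)
      _ = _ := hsplit
end

section
/- Let T ≥ 1, let X_1,…,X_T and Y_1,…,Y_T be finite nonempty types, let P_t : X_t → ℝ≥0 and Q_t : Y_t → ℝ≥0 be probability vectors, let w_t ≥ 0 be weights and d_t : X_t×Y_t → ℝ≥0 stage costs. Define the product probability vectors P(ξ) := ∏_{t=1}^T P_t(ξ_t) on X := X_1×⋯×X_T and Q(ζ) := ∏_{t=1}^T Q_t(ζ_t) on Y := Y_1×⋯×Y_T, and the separable cost d(ξ,ζ) := Σ_{t=1}^T w_t·d_t(ξ_t,ζ_t). Then d_W(P, Q; d) = Σ_{t=1}^T w_t·d_W(P_t, Q_t; d_t). -/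
open scoped NNReal Classical
open Finset

set_option maxHeartbeats 2000000
section NDHelpers

variable {T : ℕ} {Z : Fin T → Type*} [∀ t, Fintype (Z t)]

lemma nd_sum_pi_prod (f : ∀ t, Z t → ℝ≥0) :
    ∑ k : ∀ t, Z t, ∏ t, f t (k t) = ∏ t, ∑ z, f t z := by
  rw [Finset.prod_univ_sum, Fintype.piFinset_univ]

lemma nd_sum_pi_prod_mul (f : ∀ t, Z t → ℝ≥0) (s : Fin T) (c : Z s → ℝ≥0)
    (hf : ∀ t, t ≠ s → ∑ z, f t z = 1) :
    ∑ k : ∀ t, Z t, (∏ t, f t (k t)) * c (k s) = ∑ z, f s z * c z := by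
  classical
  have h1 : ∀ k : ∀ t, Z t,
      (∏ t, f t (k t)) * c (k s)
        = ∏ t, Function.update f s (fun z => f s z * c z) t (k t) := by
    intro k
    have e1 : ∏ t, Function.update f s (fun z => f s z * c z) t (k t)
        = (f s (k s) * c (k s)) * ∏ t ∈ Finset.univ.erase s, f t (k t) := by
      rw [← Finset.mul_prod_erase Finset.univ
        (fun t => Function.update f s (fun z => f s z * c z) t (k t)) (Finset.mem_univ s)]
      simp only [Function.update_self]
      refine congrArg _ (Finset.prod_congr rfl fun t ht => ?_)
      rw [Function.update_of_ne (Finset.ne_of_mem_erase ht)]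
    have e2 : ∏ t, f t (k t) = f s (k s) * ∏ t ∈ Finset.univ.erase s, f t (k t) :=
      (Finset.mul_prod_erase Finset.univ _ (Finset.mem_univ s)).symm
    rw [e1, e2]; ring
  rw [Finset.sum_congr rfl fun k _ => h1 k, nd_sum_pi_prod]
  rw [Finset.prod_eq_single s]
  · simp only [Function.update_self]
  · intro t _ hts
    rw [Finset.sum_congr rfl fun z _ => by rw [Function.update_of_ne hts], hf t hts]
  · intro h; exact absurd (Finset.mem_univ s) h

lemma nd_sum4_comm {α β γ δ M : Type*} [Fintype α] [Fintype β] [Fintype γ] [Fintype δ]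
    [AddCommMonoid M] (A : α → β → γ → δ → M) :
    ∑ a, ∑ b, ∑ x, ∑ y, A a b x y = ∑ x, ∑ y, ∑ a, ∑ b, A a b x y := by
  calc ∑ a, ∑ b, ∑ x, ∑ y, A a b x y
      = ∑ a, ∑ x, ∑ b, ∑ y, A a b x y :=
        Finset.sum_congr rfl fun a _ => Finset.sum_comm
    _ = ∑ x, ∑ a, ∑ b, ∑ y, A a b x y := Finset.sum_comm
    _ = ∑ x, ∑ a, ∑ y, ∑ b, A a b x y :=
        Finset.sum_congr rfl fun x _ =>
          Finset.sum_congr rfl fun a _ => Finset.sum_comm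
    _ = ∑ x, ∑ y, ∑ a, ∑ b, A a b x y :=
        Finset.sum_congr rfl fun x _ => Finset.sum_comm

def ndPairEquiv (X Y : ℕ → Type) (T : ℕ) :
    (∀ t : Fin T, X t.1 × Y t.1) ≃ (NDPath X T) × (NDPath Y T) where
  toFun k := (fun t => (k t).1, fun t => (k t).2)
  invFun ij t := (ij.1 t, ij.2 t)
  left_inv k := rfl
  right_inv ij := rfl

lemma nd_sum_pair {X Y : ℕ → Type} {T : ℕ} [∀ n, Fintype (X n)] [∀ n, Fintype (Y n)]
    (F : NDPath X T → NDPath Y T → ℝ≥0) :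
    ∑ i, ∑ j, F i j = ∑ k : ∀ t : Fin T, X t.1 × Y t.1,
      F (fun t => (k t).1) (fun t => (k t).2) := by
  have h1 : ∑ p : NDPath X T × NDPath Y T, F p.1 p.2 = ∑ i, ∑ j, F i j :=
    Fintype.sum_prod_type _
  have h2 : ∑ k : ∀ t : Fin T, X t.1 × Y t.1,
      F (fun t => (k t).1) (fun t => (k t).2)
        = ∑ p : NDPath X T × NDPath Y T, F p.1 p.2 :=
    Equiv.sum_comp (ndPairEquiv X Y T) (fun p => F p.1 p.2)
  rw [← h1, ← h2]

lemma dW_def {A B : Type*} [Fintype A] [Fintype B]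
    (P : A → ℝ≥0) (Q : B → ℝ≥0) (c : A → B → ℝ≥0) :
    dW P Q c = sInf { v | ∃ π : A → B → ℝ≥0,
      (∀ a, ∑ b, π a b = P a) ∧ (∀ b, ∑ a, π a b = Q b) ∧
      v = ∑ a, ∑ b, π a b * c a b } := rfl

end NDHelpers

/-- The Wasserstein value between the product measures of the stagewise
marginals, with a separable cost, equals the weighted sum of the stagewise Wasserstein
values. -/
theorem dW_product_separable_cost
    (T : ℕ) (hT : 1 ≤ T) (X Y : ℕ → Type)
    [∀ n, Fintype (X n)] [∀ n, Nonempty (X n)]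
    [∀ n, Fintype (Y n)] [∀ n, Nonempty (Y n)]
    (P : ∀ n, X n → ℝ≥0) (Q : ∀ n, Y n → ℝ≥0)
    (hP : ∀ t, t < T → ∑ x, P t x = 1) (hQ : ∀ t, t < T → ∑ y, Q t y = 1)
    (w : ℕ → ℝ≥0) (dstage : ∀ n, X n → Y n → ℝ≥0) :
    dW (fun i : NDPath X T => ∏ t : Fin T, P t.1 (i t))
        (fun j : NDPath Y T => ∏ t : Fin T, Q t.1 (j t))
        (fun i j => ∑ t : Fin T, w t.1 * dstage t.1 (i t) (j t))
      = ∑ t : Fin T, w t.1 * dW (P t.1) (Q t.1) (dstage t.1) := by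
  classical
  have hsP : ∀ t : Fin T, ∑ x, P t.1 x = 1 := fun t => hP t.1 t.2
  have hsQ : ∀ t : Fin T, ∑ y, Q t.1 y = 1 := fun t => hQ t.1 t.2
  have hT0 : (T : ℝ≥0) ≠ 0 := Nat.cast_ne_zero.2 (by omega)
  -- cost splitting
  have cost_split : ∀ π : NDPath X T → NDPath Y T → ℝ≥0,
      (∑ i, ∑ j, π i j * ∑ t : Fin T, w t.1 * dstage t.1 (i t) (j t))
        = ∑ t : Fin T, w t.1 * ∑ i, ∑ j, π i j * dstage t.1 (i t) (j t) := by
    intro π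
    calc ∑ i, ∑ j, π i j * ∑ t : Fin T, w t.1 * dstage t.1 (i t) (j t)
        = ∑ i, ∑ j, ∑ t : Fin T, π i j * (w t.1 * dstage t.1 (i t) (j t)) := by
          refine Finset.sum_congr rfl fun i _ => Finset.sum_congr rfl fun j _ => ?_
          rw [Finset.mul_sum]
      _ = ∑ i, ∑ t : Fin T, ∑ j, π i j * (w t.1 * dstage t.1 (i t) (j t)) :=
          Finset.sum_congr rfl fun i _ => Finset.sum_comm
      _ = ∑ t : Fin T, ∑ i, ∑ j, π i j * (w t.1 * dstage t.1 (i t) (j t)) :=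
          Finset.sum_comm
      _ = ∑ t : Fin T, w t.1 * ∑ i, ∑ j, π i j * dstage t.1 (i t) (j t) := by
          refine Finset.sum_congr rfl fun t _ => ?_
          rw [Finset.mul_sum]
          refine Finset.sum_congr rfl fun i _ => ?_
          rw [Finset.mul_sum]
          exact Finset.sum_congr rfl fun j _ => by ring
  -- the product of stagewise plans is feasible for the big problem
  have big_mem : ∀ (πs : ∀ t : Fin T, X t.1 → Y t.1 → ℝ≥0),
      (∀ t x, ∑ y, πs t x y = P t.1 x) → (∀ t y, ∑ x, πs t x y = Q t.1 y) →
      ∃ π : NDPath X T → NDPath Y T → ℝ≥0,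
        (∀ i, ∑ j, π i j = ∏ t : Fin T, P t.1 (i t)) ∧
        (∀ j, ∑ i, π i j = ∏ t : Fin T, Q t.1 (j t)) ∧
        (∑ t : Fin T, w t.1 * ∑ x, ∑ y, πs t x y * dstage t.1 x y)
          = ∑ i, ∑ j, π i j * ∑ t : Fin T, w t.1 * dstage t.1 (i t) (j t) := by
    intro πs hm1 hm2
    have hmass : ∀ t : Fin T, ∑ z : X t.1 × Y t.1, πs t z.1 z.2 = 1 := by
      intro t
      rw [Fintype.sum_prod_type]
      calc ∑ x, ∑ y, πs t x y = ∑ x, P t.1 x :=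
            Finset.sum_congr rfl fun x _ => hm1 t x
        _ = 1 := hsP t
    refine ⟨fun i j => ∏ t, πs t (i t) (j t), ?_, ?_, ?_⟩
    · intro i
      calc ∑ j : NDPath Y T, ∏ t, πs t (i t) (j t) = ∏ t, ∑ y, πs t (i t) y :=
            nd_sum_pi_prod (fun t => πs t (i t))
        _ = ∏ t : Fin T, P t.1 (i t) := Finset.prod_congr rfl fun t _ => hm1 t (i t)
    · intro j
      calc ∑ i : NDPath X T, ∏ t, πs t (i t) (j t) = ∏ t, ∑ x, πs t x (j t) :=
            nd_sum_pi_prod (fun t x => πs t x (j t))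
        _ = ∏ t : Fin T, Q t.1 (j t) := Finset.prod_congr rfl fun t _ => hm2 t (j t)
    · rw [cost_split]
      refine Finset.sum_congr rfl fun t _ => congrArg (w t.1 * ·) ?_
      rw [nd_sum_pair (fun i j => (∏ s, πs s (i s) (j s)) * dstage t.1 (i t) (j t))]
      rw [nd_sum_pi_prod_mul (fun s (z : X s.1 × Y s.1) => πs s z.1 z.2) t
            (fun z => dstage t.1 z.1 z.2) (fun s _ => hmass s)]
      rw [Fintype.sum_prod_type]
  -- the ≥ direction
  have hge : ∑ t : Fin T, w t.1 * dW (P t.1) (Q t.1) (dstage t.1)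
      ≤ dW (fun i : NDPath X T => ∏ t : Fin T, P t.1 (i t))
          (fun j : NDPath Y T => ∏ t : Fin T, Q t.1 (j t))
          (fun i j => ∑ t : Fin T, w t.1 * dstage t.1 (i t) (j t)) := by
    rw [dW_def]
    refine le_csInf ?_ ?_
    · obtain ⟨π, hm1, hm2, hv⟩ := big_mem (fun t x y => P t.1 x * Q t.1 y)
        (fun t x => by rw [← Finset.mul_sum, hsQ t, mul_one])
        (fun t y => by rw [← Finset.sum_mul, hsP t, one_mul])
      exact ⟨_, π, hm1, hm2, rfl⟩
    · rintro b ⟨π, hπ1', hπ2', rfl⟩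
      have hπ1 : ∀ i, ∑ j, π i j = ∏ t : Fin T, P t.1 (i t) := hπ1'
      have hπ2 : ∀ j, ∑ i, π i j = ∏ t : Fin T, Q t.1 (j t) := hπ2'
      rw [cost_split π]
      refine Finset.sum_le_sum fun t _ => mul_le_mul_right ?_ (w t.1)
      have collapse : ∀ (V : X t.1 → Y t.1 → ℝ≥0) (i : NDPath X T) (j : NDPath Y T),
          (∑ x, ∑ y, if i t = x ∧ j t = y then V x y else 0) = V (i t) (j t) := by
        intro V i j
        have h1 : ∀ x, (∑ y, if i t = x ∧ j t = y then V x y else 0)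
            = if i t = x then V x (j t) else 0 := by
          intro x; by_cases h : i t = x
          · simp [h]
          · simp [h]
        rw [Finset.sum_congr rfl fun x _ => h1 x]
        simp
      have hval : (∑ i, ∑ j, π i j * dstage t.1 (i t) (j t))
          = ∑ x, ∑ y,
              (∑ i, ∑ j, if i t = x ∧ j t = y then π i j else 0) * dstage t.1 x y := by
        calc ∑ i, ∑ j, π i j * dstage t.1 (i t) (j t)
            = ∑ i, ∑ j, ∑ x, ∑ y,
                (if i t = x ∧ j t = y then π i j * dstage t.1 x y else 0) := by
              refine Finset.sum_congr rfl fun i _ => Finset.sum_congr rfl fun j _ => ?_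
              exact (collapse (fun x y => π i j * dstage t.1 x y) i j).symm
          _ = ∑ x, ∑ y, ∑ i, ∑ j,
                (if i t = x ∧ j t = y then π i j * dstage t.1 x y else 0) :=
              nd_sum4_comm _
          _ = ∑ x, ∑ y,
              (∑ i, ∑ j, if i t = x ∧ j t = y then π i j else 0) * dstage t.1 x y := by
              refine Finset.sum_congr rfl fun x _ => Finset.sum_congr rfl fun y _ => ?_
              rw [Finset.sum_mul]
              refine Finset.sum_congr rfl fun i _ => ?_
              rw [Finset.sum_mul]
              refine Finset.sum_congr rfl fun j _ => ?_
              by_cases h : i t = x ∧ j t = y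
              · simp [h]
              · simp [h]
      rw [dW_def]
      refine csInf_le (OrderBot.bddBelow _)
        ⟨fun x y => ∑ i, ∑ j, if i t = x ∧ j t = y then π i j else 0, ?_, ?_, ?_⟩
      · intro x
        have step1 : ∀ (i : NDPath X T) (j : NDPath Y T),
            (∑ y, if i t = x ∧ j t = y then π i j else 0)
              = if i t = x then π i j else 0 := by
          intro i j; by_cases h : i t = x
          · simp [h]
          · simp [h]
        calc ∑ y, ∑ i, ∑ j, (if i t = x ∧ j t = y then π i j else 0)
            = ∑ i, ∑ j, ∑ y, (if i t = x ∧ j t = y then π i j else 0) := by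
              rw [Finset.sum_comm]
              exact Finset.sum_congr rfl fun i _ => Finset.sum_comm
          _ = ∑ i : NDPath X T, (∏ s, P s.1 (i s)) * (if i t = x then 1 else 0) := by
              refine Finset.sum_congr rfl fun i _ => ?_
              rw [Finset.sum_congr rfl fun j _ => step1 i j]
              by_cases h : i t = x
              · simp [h, hπ1 i]
              · simp [h]
          _ = ∑ z, P t.1 z * (if z = x then 1 else 0) :=
              nd_sum_pi_prod_mul (fun s => P s.1) t (fun z => if z = x then 1 else 0)
                (fun s _ => hsP s)
          _ = P t.1 x := by simp
      · intro y
        have step1 : ∀ (i : NDPath X T) (j : NDPath Y T),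
            (∑ x, if i t = x ∧ j t = y then π i j else 0)
              = if j t = y then π i j else 0 := by
          intro i j; by_cases h : j t = y
          · simp [h]
          · simp [h]
        calc ∑ x, ∑ i, ∑ j, (if i t = x ∧ j t = y then π i j else 0)
            = ∑ i, ∑ j, ∑ x, (if i t = x ∧ j t = y then π i j else 0) := by
              rw [Finset.sum_comm]
              exact Finset.sum_congr rfl fun i _ => Finset.sum_comm
          _ = ∑ i, ∑ j, (if j t = y then π i j else 0) :=
              Finset.sum_congr rfl fun i _ => Finset.sum_congr rfl fun j _ => step1 i j
          _ = ∑ j, ∑ i, (if j t = y then π i j else 0) := Finset.sum_comm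
          _ = ∑ j : NDPath Y T, (∏ s, Q s.1 (j s)) * (if j t = y then 1 else 0) := by
              refine Finset.sum_congr rfl fun j _ => ?_
              by_cases h : j t = y
              · simp [h, hπ2 j]
              · simp [h]
          _ = ∑ z, Q t.1 z * (if z = y then 1 else 0) :=
              nd_sum_pi_prod_mul (fun s => Q s.1) t (fun z => if z = y then 1 else 0)
                (fun s _ => hsQ s)
          _ = Q t.1 y := by simp
      · exact hval
  -- the ≤ direction
  have hle : dW (fun i : NDPath X T => ∏ t : Fin T, P t.1 (i t))
          (fun j : NDPath Y T => ∏ t : Fin T, Q t.1 (j t))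
          (fun i j => ∑ t : Fin T, w t.1 * dstage t.1 (i t) (j t))
      ≤ ∑ t : Fin T, w t.1 * dW (P t.1) (Q t.1) (dstage t.1) := by
    by_contra hcon
    push_neg at hcon
    set L := dW (fun i : NDPath X T => ∏ t : Fin T, P t.1 (i t))
        (fun j : NDPath Y T => ∏ t : Fin T, Q t.1 (j t))
        (fun i j => ∑ t : Fin T, w t.1 * dstage t.1 (i t) (j t)) with hLdef
    set R := ∑ t : Fin T, w t.1 * dW (P t.1) (Q t.1) (dstage t.1) with hRdef
    set ε := (L - R) / 2 with hεdef
    have hεpos : 0 < ε := div_pos (tsub_pos_of_lt hcon) zero_lt_two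
    have hchoice : ∀ t : Fin T, ∃ πt : X t.1 → Y t.1 → ℝ≥0,
        (∀ x, ∑ y, πt x y = P t.1 x) ∧ (∀ y, ∑ x, πt x y = Q t.1 y) ∧
        w t.1 * (∑ x, ∑ y, πt x y * dstage t.1 x y)
          ≤ w t.1 * dW (P t.1) (Q t.1) (dstage t.1) + ε / T := by
      intro t
      by_cases hw : w t.1 = 0
      · exact ⟨fun x y => P t.1 x * Q t.1 y,
          fun x => by rw [← Finset.mul_sum, hsQ t, mul_one],
          fun y => by rw [← Finset.sum_mul, hsP t, one_mul],
          by simp [hw]⟩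
      · have hne : { v | ∃ πt : X t.1 → Y t.1 → ℝ≥0,
            (∀ x, ∑ y, πt x y = P t.1 x) ∧ (∀ y, ∑ x, πt x y = Q t.1 y) ∧
            v = ∑ x, ∑ y, πt x y * dstage t.1 x y }.Nonempty :=
          ⟨_, ⟨fun x y => P t.1 x * Q t.1 y,
            fun x => by rw [← Finset.mul_sum, hsQ t, mul_one],
            fun y => by rw [← Finset.sum_mul, hsP t, one_mul], rfl⟩⟩
        have hlt : dW (P t.1) (Q t.1) (dstage t.1)
            < dW (P t.1) (Q t.1) (dstage t.1) + ε / ((T : ℝ≥0) * w t.1) := by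
          refine lt_add_of_pos_right _ (div_pos hεpos (mul_pos ?_ (pos_iff_ne_zero.2 hw)))
          exact lt_of_le_of_ne zero_le (Ne.symm hT0)
        rw [dW_def] at hlt
        obtain ⟨v, hvmem, hvlt⟩ := exists_lt_of_csInf_lt hne hlt
        obtain ⟨πt, h1, h2, rfl⟩ := hvmem
        refine ⟨πt, h1, h2, ?_⟩
        have hcalc : w t.1 * (ε / ((T : ℝ≥0) * w t.1)) = ε / T := by
          rw [mul_comm ((T : ℝ≥0)) (w t.1), ← div_div, ← mul_div_assoc,
            mul_comm (w t.1) (ε / w t.1), div_mul_cancel₀ _ hw]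
        calc w t.1 * (∑ x, ∑ y, πt x y * dstage t.1 x y)
            ≤ w t.1 * (dW (P t.1) (Q t.1) (dstage t.1) + ε / ((T : ℝ≥0) * w t.1)) :=
              mul_le_mul_right hvlt.le _
          _ = w t.1 * dW (P t.1) (Q t.1) (dstage t.1) + ε / T := by
              rw [mul_add, hcalc]
    choose πs hs1 hs2 hs3 using hchoice
    obtain ⟨π, hm1, hm2, hv⟩ := big_mem πs hs1 hs2
    have hL1 : L ≤ ∑ t : Fin T, w t.1 * ∑ x, ∑ y, πs t x y * dstage t.1 x y := by
      rw [hLdef, dW_def]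
      exact csInf_le (OrderBot.bddBelow _) ⟨π, hm1, hm2, hv⟩
    have hL2 : L ≤ R + ε := by
      refine hL1.trans ?_
      calc ∑ t : Fin T, w t.1 * ∑ x, ∑ y, πs t x y * dstage t.1 x y
          ≤ ∑ t : Fin T, (w t.1 * dW (P t.1) (Q t.1) (dstage t.1) + ε / T) :=
            Finset.sum_le_sum fun t _ => hs3 t
        _ = R + ∑ _t : Fin T, ε / T := Finset.sum_add_distrib
        _ = R + ε := by
            congr 1
            rw [Finset.sum_const, Finset.card_univ, Fintype.card_fin, nsmul_eq_mul,
              mul_comm, div_mul_cancel₀ _ hT0]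
    have hfin : R + ε < L := by
      have h4 : ε < L - R := NNReal.half_lt_self (ne_of_gt (tsub_pos_of_lt hcon))
      calc R + ε < R + (L - R) := add_lt_add_right h4 R
        _ = L := add_tsub_cancel_of_le hcon.le
    exact absurd hL2 (not_le.2 hfin)
  exact le_antisymm hle hge
end
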